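/- arXiv:1801.00179 — 3 statements merged into one kernel-verified Lean document; each statement's English description precedes it below -/
import Mathlib

section
/- Let X be a topological space and n ∈ ℕ. If there exists a subset A ⊆ X with |A| ≤ n such that X ∖ A has at least n+2 connected components, then X is not (n+2)-arc connected. -/
open Topology

noncomputable section

variable {V : Type*}

open Classical in
/-- The Dirac function marking a vertex: the point of `|G|` corresponding to vertex `v`. -/
noncomputable def vertexPoint (v : V) : V → ℝ := fun u => if u = v then 1 else 0

open Classical in
/-- The point of `|G|` lying on the edge `vw` at parameter `t` (measured from `v` towards `w`). -/
noncomputable def edgePoint (v w : V) (t : ℝ) : V → ℝ :=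
  fun u => (if u = v then 1 - t else 0) + (if u = w then t else 0)

/-- The geometric realization `|G|` of a simple graph `G`, realized as the set of
formal convex combinations of adjacent pairs of vertices; each closed edge carries
its usual topology as a copy of `[0,1]`. -/
def GraphRealization (G : SimpleGraph V) : Set (V → ℝ) :=
  {x | (∃ v, x = vertexPoint v) ∨
    ∃ v w t, G.Adj v w ∧ t ∈ Set.Icc (0 : ℝ) 1 ∧ x = edgePoint v w t}

/-- A subset of a topological space is an arc if it is homeomorphic to `[0,1]`. -/
def IsArc {X : Type*} [TopologicalSpace X] (A : Set X) : Prop :=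
  Nonempty (↥A ≃ₜ ↥unitInterval)

/-- A space is `n`-arc connected if any at most `n` points lie on a common arc. -/
def NArcConn (X : Type*) [TopologicalSpace X] (n : ℕ) : Prop :=
  ∀ S : Finset X, S.card ≤ n → ∃ A : Set X, IsArc A ∧ ↑S ⊆ A

/-- The unit circle in the plane. -/
def unitCircleSet : Set (ℝ × ℝ) := {p | p.1 ^ 2 + p.2 ^ 2 = 1}

/-- A subset of a topological space is a simple closed curve if homeomorphic to the circle. -/
def IsSimpleClosedCurve {X : Type*} [TopologicalSpace X] (C : Set X) : Prop :=
  Nonempty (↥C ≃ₜ ↥unitCircleSet)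

/-- A space is `n`-circle connected if any at most `n` points lie on a common
simple closed curve. -/
def NCircleConn (X : Type*) [TopologicalSpace X] (n : ℕ) : Prop :=
  ∀ S : Finset X, S.card ≤ n → ∃ C : Set X, IsSimpleClosedCurve C ∧ ↑S ⊆ C

/-- A space is `n`-strongly arc connected if any list of at most `n` points is contained
in an arc, the points appearing along the arc in the listed order. -/
def NStrongArcConn (X : Type*) [TopologicalSpace X] (n : ℕ) : Prop :=
  ∀ l : List X, l.length ≤ n →
    ∃ f : ↥unitInterval → X, Topology.IsEmbedding f ∧
      ∃ t : Fin l.length → ↥unitInterval, Monotone t ∧ ∀ i, f (t i) = l.get i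

/-- A graph is `k`-connected if removing fewer than `k` vertices leaves it connected. -/
def KConnected (G : SimpleGraph V) (k : ℕ) : Prop :=
  ∀ S : Set V, S.encard < (k : ℕ∞) → (G.induce (Sᶜ : Set V)).Connected

/-- A graph is cyclically connected if any two vertices lie on a common cycle. -/
def CyclicallyConnected (G : SimpleGraph V) : Prop :=
  ∀ v w : V, ∃ (u : V) (c : G.Walk u u), c.IsCycle ∧ v ∈ c.support ∧ w ∈ c.support

/-- The circle of radius `r` centered at `c` in the plane. -/
def circleAt (c : ℝ × ℝ) (r : ℝ) : Set (ℝ × ℝ) :=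
  {p | (p.1 - c.1) ^ 2 + (p.2 - c.2) ^ 2 = r ^ 2}

/-- The horizontal segment at height `y` from abscissa `a` to `b`. -/
def hSeg (y a b : ℝ) : Set (ℝ × ℝ) := {p | p.2 = y ∧ a ≤ p.1 ∧ p.1 ≤ b}

/-- The θ-curve: unit circle together with horizontal diameter. -/
def thetaSet : Set (ℝ × ℝ) := circleAt (0, 0) 1 ∪ hSeg 0 (-1) 1

/-- Figure-eight: two unit circles meeting at the origin. -/
def figureEightSet : Set (ℝ × ℝ) := circleAt (-1, 0) 1 ∪ circleAt (1, 0) 1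

/-- Lollipop: unit circle with the segment from `(1,0)` to `(2,0)` attached. -/
def lollipopSet : Set (ℝ × ℝ) := circleAt (0, 0) 1 ∪ hSeg 0 1 2

/-- Lollipop with its free endpoint removed. -/
def openLollipopSet : Set (ℝ × ℝ) := lollipopSet \ {(2, 0)}

/-- Dumbbell: two disjoint unit circles joined by a segment. -/
def dumbbellSet : Set (ℝ × ℝ) := circleAt (-2, 0) 1 ∪ circleAt (2, 0) 1 ∪ hSeg 0 (-1) 1

/-- Happy-face curve: two circles meeting at a point, joined by a further arc. -/
def happyFaceSet : Set (ℝ × ℝ) :=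
  circleAt (-1, 0) 1 ∪ circleAt (1, 0) 1 ∪ {p | p.1 ^ 2 + p.2 ^ 2 = 4 ∧ p.2 ≤ 0}

/-- Baguette curve: two disjoint circles joined by two disjoint arcs. -/
def baguetteSet : Set (ℝ × ℝ) :=
  circleAt (-3, 0) 1 ∪ circleAt (3, 0) 1 ∪ hSeg 0 (-2) 2 ∪ hSeg 1 (-3) 3

/-- A graph is a basic 4-ac graph iff its realization is homeomorphic to a circle,
a θ-curve, a happy-face curve or a baguette curve (this captures precisely the
subdivisions of those four graphs). -/
def IsBasicFourAC {W : Type*} (H : SimpleGraph W) : Prop :=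
  Nonempty (↥(GraphRealization H) ≃ₜ ↥unitCircleSet) ∨
  Nonempty (↥(GraphRealization H) ≃ₜ ↥thetaSet) ∨
  Nonempty (↥(GraphRealization H) ≃ₜ ↥happyFaceSet) ∨
  Nonempty (↥(GraphRealization H) ≃ₜ ↥baguetteSet)

/-- A chain-graph decomposition of the connected graph `G`: links indexed by an
interval `J` of `ℤ`, non-consecutive links are disjoint, consecutive links share
exactly one vertex. -/
structure IsChainGraph (G : SimpleGraph V) (J : Set ℤ) (L : ℤ → G.Subgraph) : Prop where
  connected : G.Connected
  ordConnected : J.OrdConnected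
  nonempty : J.Nonempty
  cover : (⨆ i ∈ J, L i) = (⊤ : G.Subgraph)
  sep : ∀ i ∈ J, ∀ j ∈ J, i + 1 < j → (L i).verts ∩ (L j).verts = ∅
  link : ∀ i ∈ J, i + 1 ∈ J → ∃ v, (L i).verts ∩ (L (i + 1)).verts = {v}

/-- A cut-vertex: a vertex whose removal disconnects the graph. -/
def IsCutVertex (G : SimpleGraph V) (v : V) : Prop :=
  ¬ (G.induce ({v}ᶜ : Set V)).Connected

/-- A block: a maximal 2-connected subgraph. -/
def IsBlock (G : SimpleGraph V) (H : G.Subgraph) : Prop :=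
  KConnected H.coe 2 ∧ ∀ H' : G.Subgraph, H ≤ H' → KConnected H'.coe 2 → H' = H

/-- The block graph of `G`: the bipartite graph on cut-vertices and blocks, a cut-vertex
being adjacent to the blocks containing it. -/
def BlockGraph (G : SimpleGraph V) :
    SimpleGraph ({v : V // IsCutVertex G v} ⊕ {H : G.Subgraph // IsBlock G H}) :=
  SimpleGraph.fromRel fun a b =>
    ∃ (c : {v : V // IsCutVertex G v}) (B : {H : G.Subgraph // IsBlock G H}),
      a = Sum.inl c ∧ b = Sum.inr B ∧ (c : V) ∈ (B : G.Subgraph).verts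

/-- An `A`–`B` path: a path starting in `A`, ending in `B` and meeting `A ∪ B` only
in these two endvertices. -/
structure ABPath (G : SimpleGraph V) (A B : Set V) where
  first : V
  last : V
  walk : G.Walk first last
  isPath : walk.IsPath
  firstA : first ∈ A
  lastB : last ∈ B
  meetA : ∀ v ∈ walk.support, v ∈ A → v = first
  meetB : ∀ v ∈ walk.support, v ∈ B → v = last

/-- A family of pairwise vertex-disjoint paths. -/
def PathFamilyDisjoint {G : SimpleGraph V} {A B : Set V} {k : ℕ}
    (P : Fin k → ABPath G A B) : Prop :=
  ∀ i j, i ≠ j → ∀ v, v ∈ (P i).walk.support → v ∉ (P j).walk.support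

/-- The set of vertices used by a family of paths. -/
def familySupport {G : SimpleGraph V} {A B : Set V} {k : ℕ}
    (P : Fin k → ABPath G A B) : Set V :=
  {v | ∃ i, v ∈ (P i).walk.support}

/-- The set of edges used by a family of paths. -/
def familyEdges {G : SimpleGraph V} {A B : Set V} {k : ℕ}
    (P : Fin k → ABPath G A B) : Set (Sym2 V) :=
  {e | ∃ i, e ∈ (P i).walk.edges}

/-- A walk `W` (with no repeated edges) is alternating with respect to the disjoint
path family `P`: it starts in `A` off the paths; repeated vertices lie on paths of the
family; upon hitting a path by a new edge it follows that path backwards for at least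
one edge; and it traverses edges of paths of the family only backwards. -/
structure IsAlternatingWalk {G : SimpleGraph V} {A B : Set V} {k : ℕ}
    (P : Fin k → ABPath G A B) {x y : V} (W : G.Walk x y) : Prop where
  trail : W.IsTrail
  startA : x ∈ A
  startOff : x ∉ familySupport P
  repeats : ∀ v, List.Duplicate v W.support → v ∈ familySupport P
  follows : ∀ (i : ℕ) (hi : i < W.darts.length) (j : Fin k),
      (W.darts.get ⟨i, hi⟩).snd ∈ (P j).walk.support →
      (W.darts.get ⟨i, hi⟩).edge ∉ (P j).walk.edges →
      ∃ h : i + 1 < W.darts.length, (W.darts.get ⟨i + 1, h⟩).symm ∈ (P j).walk.darts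
  backward : ∀ d ∈ W.darts, ∀ j : Fin k,
      d.edge ∈ (P j).walk.edges → d.symm ∈ (P j).walk.darts

end

/-- If some set `A` of at most `n` points of a topological space `X` is such
that `X \ A` has at least `n+2` connected components, then `X` is not `(n+2)`-arc
connected. -/
theorem statement0 {X : Type*} [TopologicalSpace X] (n : ℕ) (A : Set X)
    (hA : A.encard ≤ (n : ℕ∞))
    (hcomp : ∃ f : Fin (n + 2) → ConnectedComponents ↥(Aᶜ), Function.Injective f) :
    ¬ NArcConn X (n + 2) := by
  intro hac
  classical
  obtain ⟨f, hf⟩ := hcomp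
  have hAfin : A.Finite := Set.finite_of_encard_le_coe hA
  have hAcard : A.ncard ≤ n := (Set.encard_le_coe_iff_finite_ncard_le.mp hA).2
  choose xt hxt using fun i => ConnectedComponents.surjective_coe (f i)
  set S : Finset X := Finset.image (fun i => ((xt i : X))) Finset.univ with hS
  obtain ⟨Arc, hArc, hSArc⟩ := hac S (Finset.card_image_le.trans (by simp))
  obtain ⟨e⟩ := hArc
  have hmem : ∀ i, ((xt i : X)) ∈ Arc := fun i =>
    hSArc (by simp [hS])
  set φ : ↥unitInterval → X := fun t => ((e.symm t : ↥Arc) : X) with hφ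
  have hφc : Continuous φ := continuous_subtype_val.comp e.symm.continuous
  have hφinj : Function.Injective φ := Subtype.val_injective.comp e.symm.injective
  set Bs : Set ↥unitInterval := {t | φ t ∈ A} with hBs
  have hBfin : Bs.Finite := Set.Finite.preimage hφinj.injOn hAfin
  have hBcard : Bs.ncard ≤ n := by
    calc Bs.ncard = (φ '' Bs).ncard := (Set.ncard_image_of_injective _ hφinj).symm
    _ ≤ A.ncard := Set.ncard_le_ncard (by rintro _ ⟨t, ht, rfl⟩; exact ht) hAfin
    _ ≤ n := hAcard
  set p : Fin (n+2) → ↥Arc := fun i => ⟨(xt i : X), hmem i⟩ with hp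
  set s : Fin (n+2) → ↥unitInterval := fun i => e (p i) with hs
  set u : Fin (n+2) → ℝ := fun i => (s i : ℝ) with hu
  have hφs : ∀ i, φ (s i) = (xt i : X) := by
    intro i; simp [hφ, hs, hp]
  have hsB : ∀ i, s i ∉ Bs := by
    intro i hi
    rw [hBs, Set.mem_setOf_eq, hφs i] at hi
    exact (xt i).2 hi
  set g : Fin (n+2) → ℕ := fun i => (Bs ∩ {t | (t : ℝ) < u i}).ncard with hg
  have hgfin : ∀ (r : ℝ), (Bs ∩ {t | (t : ℝ) < r}).Finite :=
    fun r => hBfin.subset Set.inter_subset_left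
  have hgle : ∀ i, g i ≤ n := fun i =>
    (Set.ncard_le_ncard Set.inter_subset_left hBfin).trans hBcard
  -- key: no two indices with u i < u j can have g i = g j
  have key : ∀ i j, u i < u j → g i = g j → False := by
    intro i j hij hgij
    by_cases hb : ∃ b ∈ Bs, u i ≤ (b : ℝ) ∧ (b : ℝ) ≤ u j
    · obtain ⟨b, hbB, hb1, hb2⟩ := hb
      have hbne1 : (b : ℝ) ≠ u i := fun h => hsB i (by
        have : b = s i := Subtype.ext h
        rwa [this] at hbB)
      have hbne2 : (b : ℝ) ≠ u j := fun h => hsB j (by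
        have : b = s j := Subtype.ext h
        rwa [this] at hbB)
      have hlt1 : u i < (b : ℝ) := lt_of_le_of_ne hb1 (Ne.symm hbne1)
      have hlt2 : (b : ℝ) < u j := lt_of_le_of_ne hb2 hbne2
      have hss : (Bs ∩ {t | (t : ℝ) < u i}) ⊂ (Bs ∩ {t | (t : ℝ) < u j}) := by
        constructor
        · intro t ⟨ht1, ht2⟩; exact ⟨ht1, lt_trans ht2 hij⟩
        · intro hsub
          have : b ∈ Bs ∩ {t | (t : ℝ) < u i} := hsub ⟨hbB, hlt2⟩
          exact absurd this.2 (not_lt.mpr hlt1.le)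
      have h2 := Set.ncard_lt_ncard hss (hgfin (u j))
      simp only [hg] at hgij
      omega
    · push_neg at hb
      -- build a connected set in Aᶜ containing xt i and xt j
      set F : ℝ → X := fun r => φ (Set.projIcc 0 1 zero_le_one r) with hF
      have hFc : Continuous F := hφc.comp continuous_projIcc
      have hC : IsPreconnected (F '' Set.Icc (u i) (u j)) :=
        isPreconnected_Icc.image F hFc.continuousOn
      have hFs : ∀ k : Fin (n+2), F (u k) = (xt k : X) := by
        intro k
        have : Set.projIcc 0 1 zero_le_one (u k) = s k := by
          rw [Set.projIcc_of_mem zero_le_one (s k).2]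
        rw [hF]; simp only [this]; exact hφs k
      have hCA : F '' Set.Icc (u i) (u j) ⊆ Aᶜ := by
        rintro _ ⟨r, hr, rfl⟩ hrA
        have hrmem : r ∈ unitInterval :=
          ⟨le_trans (s i).2.1 hr.1, le_trans hr.2 (s j).2.2⟩
        have hproj : Set.projIcc 0 1 zero_le_one r = ⟨r, hrmem⟩ :=
          Set.projIcc_of_mem zero_le_one hrmem
        have hbB : (⟨r, hrmem⟩ : ↥unitInterval) ∈ Bs := by
          rw [hBs, Set.mem_setOf_eq, ← hproj]; exact hrA
        exact absurd (hb _ hbB hr.1) (not_lt.mpr hr.2)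
      set C' : Set ↥(Aᶜ) := Subtype.val ⁻¹' (F '' Set.Icc (u i) (u j)) with hC'
      have hval : Subtype.val '' C' = F '' Set.Icc (u i) (u j) := by
        rw [hC', Subtype.image_preimage_coe, Set.inter_eq_right.mpr hCA]
      have hC'conn : IsPreconnected C' := by
        rw [← Topology.IsInducing.subtypeVal.isPreconnected_image, hval]; exact hC
      have hxiC : xt i ∈ C' := by
        rw [hC', Set.mem_preimage, ← hFs i]
        exact ⟨u i, ⟨le_refl _, hij.le⟩, rfl⟩
      have hxjC : xt j ∈ C' := by
        rw [hC', Set.mem_preimage, ← hFs j]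
        exact ⟨u j, ⟨hij.le, le_refl _⟩, rfl⟩
      have : connectedComponent (xt i) = connectedComponent (xt j) := by
        have h1 := hC'conn.subset_connectedComponent hxiC
        exact connectedComponent_eq (h1 hxjC)
      have : f i = f j := by
        rw [← hxt i, ← hxt j, ConnectedComponents.coe_eq_coe]; exact this
      have : i = j := hf this
      subst this
      exact lt_irrefl _ hij
  -- pigeonhole
  obtain ⟨i, -, j, -, hij, hgij⟩ :=
    Finset.exists_ne_map_eq_of_card_lt_of_maps_to
      (s := (Finset.univ : Finset (Fin (n+2)))) (t := Finset.range (n+1))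
      (by simp) (fun i _ => Finset.mem_range.mpr (Nat.lt_succ_of_le (hgle i)))
  have huij : u i ≠ u j := by
    intro h
    apply hij
    apply hf
    rw [← hxt i, ← hxt j]
    congr 1
    have hsij : s i = s j := Subtype.ext h
    have : p i = p j := e.injective hsij
    exact Subtype.ext (congrArg (Subtype.val : ↥Arc → X) this)
  rcases huij.lt_or_gt with h | h
  · exact key i j h hgij
  · exact key j i h hgij.symm
end

section
/- Let G be a simple graph with at least one edge and let n ∈ ℕ. If no set of n points of |G| cuts |G| into at least n+2 connected components (i.e. for every A ⊆ |G| with |A| = n, the space |G| ∖ A has at most n+1 connected components), then for every 1 ≤ m ≤ n, no set of m points of |G| cuts |G| into at least m+2 connected components. -/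
open Topology

section MyAux

variable {V : Type*}

lemma vertexPoint_self (v : V) : vertexPoint v v = 1 := by simp [vertexPoint]

lemma vertexPoint_ne {u v : V} (h : u ≠ v) : vertexPoint v u = 0 := by simp [vertexPoint, h]

lemma edgePoint_left {v w : V} (h : v ≠ w) (t : ℝ) : edgePoint v w t v = 1 - t := by
  simp [edgePoint, h]

lemma edgePoint_right {v w : V} (h : v ≠ w) (t : ℝ) : edgePoint v w t w = t := by
  simp [edgePoint, h.symm]

lemma edgePoint_other {v w u : V} (h1 : u ≠ v) (h2 : u ≠ w) (t : ℝ) : edgePoint v w t u = 0 := by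
  simp [edgePoint, h1, h2]

lemma edgePoint_zero (v w : V) : edgePoint v w 0 = vertexPoint v := by
  funext u; simp [edgePoint, vertexPoint]

lemma edgePoint_one (v w : V) : edgePoint v w 1 = vertexPoint w := by
  funext u; unfold edgePoint vertexPoint; split_ifs <;> norm_num

lemma edgePoint_symm (v w : V) (t : ℝ) : edgePoint w v (1 - t) = edgePoint v w t := by
  funext u; unfold edgePoint; split_ifs <;> ring

lemma continuous_edgePoint (v w : V) : Continuous (fun t : ℝ => edgePoint v w t) := by
  apply continuous_pi; intro u
  unfold edgePoint
  apply Continuous.add <;> split_ifs <;> fun_prop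

lemma eq_vertexPoint_of_one {G : SimpleGraph V} {z : V → ℝ} (hz : z ∈ GraphRealization G)
    {v : V} (h : z v = 1) : z = vertexPoint v := by
  rcases hz with ⟨u, rfl⟩ | ⟨a, b, t, hab, ht, rfl⟩
  · by_cases huv : v = u
    · subst huv; rfl
    · exfalso; rw [vertexPoint_ne huv] at h; norm_num at h
  · have hne := hab.ne
    by_cases h1 : v = a
    · subst h1
      rw [edgePoint_left hne] at h
      have ht0 : t = 0 := by linarith
      subst ht0; rw [edgePoint_zero]
    · by_cases h2 : v = b
      · subst h2
        rw [edgePoint_right hne] at h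
        subst h; rw [edgePoint_one]
      · exfalso
        rw [edgePoint_other (fun hh => h1 hh) (fun hh => h2 hh)] at h
        norm_num at h

lemma eq_edgePoint_of_mem {G : SimpleGraph V} {z : V → ℝ} (hz : z ∈ GraphRealization G)
    {v w : V} (hne : v ≠ w) (hv : z v ∈ Set.Ioo (0:ℝ) 1) (hw : z w ∈ Set.Ioo (0:ℝ) 1) :
    z = edgePoint v w (z w) := by
  rcases hz with ⟨u, rfl⟩ | ⟨a, b, t, hab, ht, rfl⟩
  · exfalso
    by_cases hvu : v = u
    · subst hvu; rw [vertexPoint_self] at hv; exact (lt_irrefl _ hv.2)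
    · rw [vertexPoint_ne hvu] at hv; exact (lt_irrefl _ hv.1)
  · have hab' := hab.ne
    have hva : v = a ∨ v = b := by
      by_contra hc
      push_neg at hc
      rw [edgePoint_other hc.1 hc.2] at hv
      exact (lt_irrefl _ hv.1)
    have hwa : w = a ∨ w = b := by
      by_contra hc
      push_neg at hc
      rw [edgePoint_other hc.1 hc.2] at hw
      exact (lt_irrefl _ hw.1)
    rcases hva with rfl | rfl <;> rcases hwa with rfl | rfl
    · exact absurd rfl hne
    · rw [edgePoint_right hab']
    · rw [edgePoint_left hab', ← edgePoint_symm]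
    · exact absurd rfl hne

lemma mem_realization_edgePoint {G : SimpleGraph V} {v w : V} (hvw : G.Adj v w) {r : ℝ}
    (hr : r ∈ Set.Icc (0:ℝ) 1) : edgePoint v w r ∈ GraphRealization G :=
  Or.inr ⟨v, w, r, hvw, hr, rfl⟩

lemma mem_of_val_image {G : SimpleGraph V} {B : Set ↥(GraphRealization G)}
    {x : ↥(GraphRealization G)} (h : x.val ∈ Subtype.val '' B) : x ∈ B := by
  rcases h with ⟨b, hb, hbe⟩
  rwa [← Subtype.coe_injective hbe]

lemma clopen_seg {G : SimpleGraph V} {v w : V} (hvw : G.Adj v w)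
    (B : Set ↥(GraphRealization G)) {α β : ℝ}
    (h0 : 0 ≤ α) (hαβ : α < β) (hβ : β < 1)
    (hαB : edgePoint v w α ∈ Subtype.val '' B) (hβB : edgePoint v w β ∈ Subtype.val '' B) :
    IsClopen {z : ↥(Bᶜ) | z.1.1 v ∈ Set.Ioo (1-β) (1-α) ∧ z.1.1 w ∈ Set.Ioo α β} := by
  have hne := hvw.ne
  have hcv : Continuous fun z : ↥(Bᶜ) => z.1.1 v :=
    (continuous_apply v).comp (continuous_subtype_val.comp continuous_subtype_val)
  have hcw : Continuous fun z : ↥(Bᶜ) => z.1.1 w :=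
    (continuous_apply w).comp (continuous_subtype_val.comp continuous_subtype_val)
  have hset : {z : ↥(Bᶜ) | z.1.1 v ∈ Set.Ioo (1-β) (1-α) ∧ z.1.1 w ∈ Set.Ioo α β} =
      {z : ↥(Bᶜ) | z.1.1 v ∈ Set.Icc (1-β) (1-α) ∧ z.1.1 w ∈ Set.Icc α β ∧
        z.1.1 v + z.1.1 w = 1} := by
    ext z
    simp only [Set.mem_setOf_eq]
    constructor
    · rintro ⟨hv, hw⟩
      have hv01 : z.1.1 v ∈ Set.Ioo (0:ℝ) 1 := ⟨by linarith [hv.1], by linarith [hv.2]⟩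
      have hw01 : z.1.1 w ∈ Set.Ioo (0:ℝ) 1 := ⟨by linarith [hw.1], by linarith [hw.2]⟩
      have hz := eq_edgePoint_of_mem z.1.2 hne hv01 hw01
      have hv' : z.1.1 v = 1 - z.1.1 w := by
        conv_lhs => rw [hz]
        rw [edgePoint_left hne]
      refine ⟨⟨le_of_lt hv.1, le_of_lt hv.2⟩, ⟨le_of_lt hw.1, le_of_lt hw.2⟩, by linarith⟩
    · rintro ⟨hv, hw, hsum⟩
      rcases eq_or_lt_of_le (le_trans h0 hw.1) with hρ0 | hρ0
      · exfalso
        have hα0 : α = 0 := le_antisymm (by linarith [hw.1]) h0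
        have hv1 : z.1.1 v = 1 := by linarith
        have hz := eq_vertexPoint_of_one z.1.2 hv1
        have hz' : z.1.1 = edgePoint v w α := by rw [hα0, edgePoint_zero, hz]
        exact z.2 (mem_of_val_image (hz' ▸ hαB))
      · have hρ1 : z.1.1 w < 1 := lt_of_le_of_lt hw.2 hβ
        have hv01 : z.1.1 v ∈ Set.Ioo (0:ℝ) 1 := ⟨by linarith, by linarith⟩
        have hz := eq_edgePoint_of_mem z.1.2 hne ⟨by linarith, by linarith⟩ ⟨hρ0, hρ1⟩
        rcases eq_or_lt_of_le hw.1 with hρα | hρα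
        · exact absurd (mem_of_val_image ((hz.symm ▸ hρα ▸ hαB : z.1.1 ∈ _))) z.2
        · rcases eq_or_lt_of_le hw.2 with hρβ | hρβ
          · exact absurd (mem_of_val_image ((hz.symm ▸ hρβ.symm ▸ hβB : z.1.1 ∈ _))) z.2
          · have hv' : z.1.1 v = 1 - z.1.1 w := by
              conv_lhs => rw [hz]; rw [edgePoint_left hne]
            exact ⟨⟨by linarith, by linarith⟩, hρα, hρβ⟩
  constructor
  · rw [hset]
    refine IsClosed.inter (IsClosed.preimage hcv isClosed_Icc) (IsClosed.inter
      (IsClosed.preimage hcw isClosed_Icc) ?_)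
    exact isClosed_eq (hcv.add hcw) continuous_const
  · exact IsOpen.inter (IsOpen.preimage hcv isOpen_Ioo) (IsOpen.preimage hcw isOpen_Ioo)

lemma mk_eq_mk_iff_ccIn {X : Type*} [TopologicalSpace X] {F : Set X}
    {p q : X} (hp : p ∈ F) (hq : q ∈ F) :
    (ConnectedComponents.mk (⟨p, hp⟩ : ↥F) = ConnectedComponents.mk ⟨q, hq⟩) ↔
      q ∈ connectedComponentIn F p := by
  rw [connectedComponentIn_eq_image hp]
  constructor
  · intro h
    have h' := ConnectedComponents.coe_eq_coe.mp h
    exact ⟨⟨q, hq⟩, h' ▸ mem_connectedComponent, rfl⟩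
  · rintro ⟨y, hy, hyq⟩
    have hy' : y = ⟨q, hq⟩ := Subtype.ext hyq
    subst hy'
    exact ConnectedComponents.coe_eq_coe.mpr (connectedComponent_eq hy)

lemma mk_eq_of_subset_preconnected {X : Type*} [TopologicalSpace X] {F S : Set X}
    (hS : IsPreconnected S) (hSF : S ⊆ F) {p q : X} (hpS : p ∈ S) (hqS : q ∈ S)
    (hp : p ∈ F) (hq : q ∈ F) :
    ConnectedComponents.mk (⟨p, hp⟩ : ↥F) = ConnectedComponents.mk ⟨q, hq⟩ :=
  (mk_eq_mk_iff_ccIn hp hq).mpr (hS.subset_connectedComponentIn hpS hSF hqS)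


lemma core {G : SimpleGraph V} {v w : V} (hvw : G.Adj v w) {m k : ℕ}
    {A B : Set ↥(GraphRealization G)}
    (f : Fin (m + 2) → ConnectedComponents ↥(Aᶜ)) (hf : Function.Injective f)
    {θ s' : ℝ} (hθ0 : 0 ≤ θ) (hs1 : s' < 1)
    {C : ℕ → ℝ}
    (hCmono : ∀ j, j < k → C j < C (j + 1))
    (hθC : θ ≤ C 0) (hCs : C k < s')
    (hCB : ∀ j, j ≤ k → edgePoint v w (C j) ∈ Subtype.val '' B)
    (hfreeA : ∀ r, θ < r → r < s' → edgePoint v w r ∉ Subtype.val '' A)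
    (hfreeB : ∀ r, θ < r → r < s' → (∀ j, j ≤ k → r ≠ C j) →
      edgePoint v w r ∉ Subtype.val '' B)
    (hBsub : ∀ x : ↥(GraphRealization G), x ∈ B →
        x ∈ A ∨ ∃ j, j ≤ k ∧ θ < C j ∧ x.1 = edgePoint v w (C j))
    (htrans : ∀ p q : ↥(GraphRealization G), p ∈ Bᶜ → q ∈ Bᶜ → p ∈ Aᶜ → q ∈ Aᶜ →
        q ∈ connectedComponentIn Bᶜ p → q ∈ connectedComponentIn Aᶜ p) :
    ∃ g : Fin (m + 1 + (k + 1)) → ConnectedComponents ↥(Bᶜ), Function.Injective g := by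
  classical
  have hne := hvw.ne
  -- monotonicity helpers
  have hCle : ∀ i j, i ≤ j → j ≤ k → C i ≤ C j := by
    intro i j hij hjk
    induction j with
    | zero => simp_all
    | succ j ih =>
      rcases Nat.lt_or_ge i (j + 1) with h | h
      · exact le_trans (ih (by omega) (by omega)) (le_of_lt (hCmono j (by omega)))
      · have : i = j + 1 := by omega
        subst this; rfl
  have h0C : 0 ≤ C 0 := le_trans hθ0 hθC
  have h0s : (0:ℝ) < s' := lt_of_le_of_lt (le_trans h0C (hCle 0 k (Nat.zero_le k) le_rfl)) hCs
  -- the parametrized edge map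
  have hmemIcc : ∀ r : ℝ, min (max r 0) s' ∈ Set.Icc (0:ℝ) 1 := fun r =>
    ⟨le_min (le_max_right r 0) (le_of_lt h0s), le_trans (min_le_right _ _) (le_of_lt hs1)⟩
  set pt : ℝ → ↥(GraphRealization G) :=
    fun r => ⟨edgePoint v w (min (max r 0) s'), mem_realization_edgePoint hvw (hmemIcc r)⟩
    with hpt_def
  have hptval : ∀ r, 0 ≤ r → r ≤ s' → (pt r).1 = edgePoint v w r := by
    intro r h1 h2
    simp only [hpt_def]
    rw [max_eq_left h1, min_eq_left h2]
  have hptcont : Continuous pt := by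
    apply Continuous.subtype_mk
    exact (continuous_edgePoint v w).comp
      ((continuous_id.max continuous_const).min continuous_const)
  -- sample parameters
  set S : ℕ → ℝ := fun j => if j = k then (C k + s') / 2 else (C j + C (j + 1)) / 2 with hS_def
  have hSlb : ∀ j, j ≤ k → C j < S j := by
    intro j hj
    by_cases h : j = k
    · subst h; simp only [hS_def, if_pos rfl]; linarith
    · simp only [hS_def, if_neg h]; have := hCmono j (by omega); linarith
  have hSub : ∀ j, j ≤ k → S j < s' := by
    intro j hj
    by_cases h : j = k
    · subst h; simp only [hS_def, if_pos rfl]; linarith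
    · simp only [hS_def, if_neg h]
      have h1 := hCmono j (by omega)
      have h2 := hCle (j + 1) k (by omega) le_rfl
      linarith
  have hSubC : ∀ j, j < k → S j < C (j + 1) := by
    intro j hj
    simp only [hS_def, if_neg (Nat.ne_of_lt hj)]
    have := hCmono j hj; linarith
  have hSθ : ∀ j, j ≤ k → θ < S j := fun j hj =>
    lt_of_le_of_lt (le_trans hθC (hCle 0 j (Nat.zero_le _) hj)) (hSlb j hj)
  have hSneC : ∀ j, j ≤ k → ∀ i, i ≤ k → S j ≠ C i := by
    intro j hj i hi
    rcases le_or_gt i j with h | h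
    · exact ne_of_gt (lt_of_le_of_lt (hCle i j h hj) (hSlb j hj))
    · rcases Nat.lt_or_ge j k with hjk | hjk
      · exact ne_of_lt (lt_of_lt_of_le (hSubC j hjk) (hCle (j + 1) i (by omega) hi))
      · omega
  -- the free segment
  have hSegPre : IsPreconnected (pt '' Set.Ioo θ s') :=
    isPreconnected_Ioo.image pt hptcont.continuousOn
  have hSegA : pt '' Set.Ioo θ s' ⊆ Aᶜ := by
    rintro x ⟨r, hr, rfl⟩ hxA
    refine hfreeA r hr.1 hr.2 ?_
    rw [← hptval r (le_trans hθ0 (le_of_lt hr.1)) (le_of_lt hr.2)]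
    exact Set.mem_image_of_mem _ hxA
  have hptA : ∀ r, θ < r → r < s' → pt r ∈ Aᶜ := fun r h1 h2 => hSegA ⟨r, ⟨h1, h2⟩, rfl⟩
  have hptB : ∀ r, θ < r → r < s' → (∀ j, j ≤ k → r ≠ C j) → pt r ∈ Bᶜ := by
    intro r h1 h2 h3 hB
    refine hfreeB r h1 h2 h3 ?_
    rw [← hptval r (le_trans hθ0 (le_of_lt h1)) (le_of_lt h2)]
    exact Set.mem_image_of_mem _ hB
  set cC : ConnectedComponents ↥(Aᶜ) :=
    ConnectedComponents.mk ⟨pt (S 0), hptA _ (hSθ 0 (Nat.zero_le k)) (hSub 0 (Nat.zero_le k))⟩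
    with hcC_def
  have hSegClass : ∀ r (h1 : θ < r) (h2 : r < s'),
      ConnectedComponents.mk (⟨pt r, hptA r h1 h2⟩ : ↥(Aᶜ)) = cC := fun r h1 h2 =>
    mk_eq_of_subset_preconnected hSegPre hSegA ⟨r, ⟨h1, h2⟩, rfl⟩
      ⟨S 0, ⟨hSθ 0 (Nat.zero_le k), hSub 0 (Nat.zero_le k)⟩, rfl⟩ _ _
  -- an injection into the classes different from cC
  obtain ⟨e, he_inj, he⟩ :
      ∃ e : Fin (m + 1) → Fin (m + 2), Function.Injective e ∧ ∀ j, f (e j) ≠ cC := by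
    by_cases hex : ∃ i0, f i0 = cC
    · obtain ⟨i0, hi0⟩ := hex
      exact ⟨i0.succAbove, Fin.succAbove_right_injective,
        fun j hj => Fin.succAbove_ne i0 j (hf (hj.trans hi0.symm))⟩
    · push_neg at hex
      exact ⟨Fin.castSucc, Fin.castSucc_injective _, fun j => hex _⟩
  -- representatives
  choose rep hrep using ConnectedComponents.surjective_coe (α := ↥(Aᶜ))
  set d : Fin (m + 1) → ↥(Aᶜ) := fun j => rep (f (e j)) with hd_def
  have hdmk : ∀ j, ConnectedComponents.mk (d j) = f (e j) := fun j => hrep _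
  have hdB : ∀ j, (d j).1 ∈ Bᶜ := by
    intro j hB
    rcases hBsub _ hB with hA | ⟨i, hik, hθi, hval⟩
    · exact (d j).2 hA
    · have hCi : C i < s' := lt_of_le_of_lt (hCle i k hik le_rfl) hCs
      have hval' : (d j).1 = pt (C i) :=
        Subtype.ext (by
          rw [hptval (C i) (le_trans hθ0 (le_of_lt hθi)) (le_of_lt hCi)]; exact hval)
      have hmk : ConnectedComponents.mk (d j) = cC := by
        have h2 : d j = ⟨pt (C i), hptA _ hθi hCi⟩ := Subtype.ext hval'
        rw [h2]; exact hSegClass _ hθi hCi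
      exact he j (by rw [← hdmk j]; exact hmk)
  set dB : Fin (m + 1) → ↥(Bᶜ) := fun j => ⟨(d j).1, hdB j⟩ with hdB_def
  have hfink : ∀ j : Fin (k + 1), (j : ℕ) ≤ k := fun j => Nat.lt_succ_iff.mp j.isLt
  have hqBmem : ∀ j : Fin (k + 1), pt (S j) ∈ Bᶜ := fun j =>
    hptB _ (hSθ _ (hfink j)) (hSub _ (hfink j)) (hSneC _ (hfink j))
  set q : Fin (k + 1) → ↥(Bᶜ) := fun j => ⟨pt (S j), hqBmem j⟩ with hq_def
  -- comparisons
  have keyDQ : ∀ (j : Fin (m + 1)) (j' : Fin (k + 1)),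
      ConnectedComponents.mk (dB j) ≠ ConnectedComponents.mk (q j') := by
    intro j j' hEq
    have hj' := hfink j'
    have h1 : pt (S j') ∈ connectedComponentIn (Bᶜ) (d j).1 :=
      (mk_eq_mk_iff_ccIn (hdB j) (hqBmem j')).mp hEq
    have h2 := htrans _ _ (hdB j) (hqBmem j') (d j).2
      (hptA _ (hSθ _ hj') (hSub _ hj')) h1
    have h3 : ConnectedComponents.mk (⟨(d j).1, (d j).2⟩ : ↥(Aᶜ)) =
        ConnectedComponents.mk ⟨pt (S j'), hptA _ (hSθ _ hj') (hSub _ hj')⟩ :=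
      (mk_eq_mk_iff_ccIn (d j).2 (hptA _ (hSθ _ hj') (hSub _ hj'))).mpr h2
    rw [Subtype.eta, hdmk j, hSegClass _ (hSθ _ hj') (hSub _ hj')] at h3
    exact he j h3
  have keyDD : ∀ j j' : Fin (m + 1),
      ConnectedComponents.mk (dB j) = ConnectedComponents.mk (dB j') → j = j' := by
    intro j j' hEq
    have h1 : (d j').1 ∈ connectedComponentIn (Bᶜ) (d j).1 :=
      (mk_eq_mk_iff_ccIn (hdB j) (hdB j')).mp hEq
    have h2 := htrans _ _ (hdB j) (hdB j') (d j).2 (d j').2 h1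
    have h3 : ConnectedComponents.mk (⟨(d j).1, (d j).2⟩ : ↥(Aᶜ)) =
        ConnectedComponents.mk ⟨(d j').1, (d j').2⟩ :=
      (mk_eq_mk_iff_ccIn (d j).2 (d j').2).mpr h2
    rw [Subtype.eta, Subtype.eta, hdmk j, hdmk j'] at h3
    exact he_inj (hf h3)
  have keyQQ : ∀ j j' : Fin (k + 1), (j : ℕ) < (j' : ℕ) →
      ConnectedComponents.mk (q j) ≠ ConnectedComponents.mk (q j') := by
    intro j j' hlt hEq
    have hj'k := hfink j'
    have hjk : (j : ℕ) < k := lt_of_lt_of_le hlt hj'k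
    have hj1k : (j : ℕ) + 1 ≤ k := hjk
    have h0Cj : 0 ≤ C j := le_trans h0C (hCle 0 j (Nat.zero_le _) (le_of_lt hjk))
    have hCj1 : C ((j : ℕ) + 1) < 1 :=
      lt_trans (lt_of_le_of_lt (hCle _ k hj1k le_rfl) hCs) hs1
    have hclop := clopen_seg hvw B h0Cj (hCmono j hjk) hCj1
      (hCB j (le_of_lt hjk)) (hCB _ hj1k)
    have hcoord : ∀ i : Fin (k + 1), (q i).1.1 = edgePoint v w (S i) := by
      intro i
      simp only [hq_def]
      exact hptval _ (le_trans hθ0 (le_of_lt (hSθ _ (hfink i)))) (le_of_lt (hSub _ (hfink i)))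
    have hqjin : q j ∈ {z : ↥(Bᶜ) |
        z.1.1 v ∈ Set.Ioo (1 - C ((j : ℕ) + 1)) (1 - C j) ∧
        z.1.1 w ∈ Set.Ioo (C j) (C ((j : ℕ) + 1))} := by
      constructor
      · rw [hcoord j, edgePoint_left hne]
        have h1 := hSlb j (le_of_lt hjk)
        have h2 := hSubC j hjk
        exact ⟨by linarith, by linarith⟩
      · rw [hcoord j, edgePoint_right hne]
        exact ⟨hSlb j (le_of_lt hjk), hSubC j hjk⟩
    have hcc := ConnectedComponents.coe_eq_coe.mp hEq
    have hsub := hclop.connectedComponent_subset hqjin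
    have hmem : q j' ∈ {z : ↥(Bᶜ) |
        z.1.1 v ∈ Set.Ioo (1 - C ((j : ℕ) + 1)) (1 - C j) ∧
        z.1.1 w ∈ Set.Ioo (C j) (C ((j : ℕ) + 1))} := by
      apply hsub
      rw [hcc]
      exact mem_connectedComponent
    have hw' : S j' < C ((j : ℕ) + 1) := by
      have := hmem.2.2
      rwa [hcoord j', edgePoint_right hne] at this
    have : C ((j : ℕ) + 1) ≤ C j' := hCle _ _ (by omega) hj'k
    have := hSlb j' hj'k
    linarith
  -- assembling
  refine ⟨(Sum.elim (fun j => ConnectedComponents.mk (dB j))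
      (fun j => ConnectedComponents.mk (q j))) ∘ finSumFinEquiv.symm,
    Function.Injective.comp ?_ (Equiv.injective _)⟩
  intro a b hab
  rcases a with a | a <;> rcases b with b | b
  · simp only [Sum.elim_inl] at hab
    rw [keyDD a b hab]
  · exact absurd hab (keyDQ a b)
  · exact absurd hab.symm (keyDQ b a)
  · simp only [Sum.elim_inr] at hab
    rcases lt_trichotomy (a : ℕ) (b : ℕ) with h | h | h
    · exact absurd hab (keyQQ a b h)
    · exact congrArg Sum.inr (Fin.ext h)
    · exact absurd hab.symm (keyQQ b a h)


lemma realization_dichotomy {G : SimpleGraph V} (x : ↥(GraphRealization G)) :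
    (∃ v w t, G.Adj v w ∧ 0 ≤ t ∧ t < 1 ∧ x.1 = edgePoint v w t) ∨
    (∃ u, x.1 = vertexPoint u ∧ ∀ y, ¬ G.Adj u y) := by
  rcases x.2 with ⟨u, hu⟩ | ⟨a, b, t, hab, ht, hx⟩
  · by_cases hadj : ∃ y, G.Adj u y
    · obtain ⟨y, hy⟩ := hadj
      exact Or.inl ⟨u, y, 0, hy, le_refl 0, one_pos, by rw [hu, edgePoint_zero u y]⟩
    · push_neg at hadj
      exact Or.inr ⟨u, hu, hadj⟩
  · rcases lt_or_eq_of_le ht.2 with h1 | h1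
    · exact Or.inl ⟨a, b, t, hab, ht.1, h1, hx⟩
    · refine Or.inl ⟨b, a, 0, hab.symm, le_rfl, one_pos, ?_⟩
      subst h1
      rw [hx, edgePoint_one, edgePoint_zero b a]

lemma exists_free_interval {G : SimpleGraph V} {v w : V} (hne : v ≠ w)
    {A : Set ↥(GraphRealization G)} (hA : A.Finite) {t : ℝ} (ht : t < 1) :
    ∃ s', t < s' ∧ s' < 1 ∧ ∀ r, t < r → r < s' → edgePoint v w r ∉ Subtype.val '' A := by
  set P := {r : ℝ | t < r ∧ r < 1 ∧ edgePoint v w r ∈ Subtype.val '' A} with hP_def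
  have hPfin : P.Finite := by
    have himg : (Subtype.val '' A).Finite := hA.image _
    have hsub : P ⊆ (fun r : ℝ => edgePoint v w r) ⁻¹' (Subtype.val '' A) := fun r hr => hr.2.2
    refine Set.Finite.subset (Set.Finite.preimage ?_ himg) hsub
    intro r1 _ r2 _ hEq
    have h2 := congrFun hEq w
    simp only at h2
    rwa [edgePoint_right hne, edgePoint_right hne] at h2
  by_cases hP : P.Nonempty
  · obtain ⟨r0, hr0, hmin⟩ := Set.exists_min_image P id hPfin hP
    refine ⟨(t + r0) / 2, by linarith [hr0.1], by linarith [hr0.1, hr0.2.1], ?_⟩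
    intro r h1 h2 hmem
    have hr1 : r < 1 := by linarith [hr0.2.1]
    have : r0 ≤ r := hmin r ⟨h1, hr1, hmem⟩
    linarith
  · refine ⟨(t + 1) / 2, by linarith, by linarith, ?_⟩
    intro r h1 h2 hmem
    exact hP ⟨r, h1, by linarith, hmem⟩

lemma encard_union_range {X : Type*} {A₀ : Set X} {j : ℕ} {F : Fin j → X}
    (hF : Function.Injective F) (hdis : ∀ i, F i ∉ A₀) :
    (A₀ ∪ Set.range F).encard = A₀.encard + j := by
  have hdisj : Disjoint A₀ (Set.range F) := by
    rw [Set.disjoint_right]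
    rintro x ⟨i, rfl⟩
    exact hdis i
  rw [Set.encard_union_eq hdisj, ← Set.image_univ, Function.Injective.encard_image hF,
    Set.encard_univ]
  congr 1
  simp


end MyAux

/-- For a graph `G` with at least one edge, if no set of `n` points of `|G|`
cuts `|G|` into at least `n+2` components, then for every `1 ≤ m ≤ n`, no set of `m`
points of `|G|` cuts `|G|` into at least `m+2` components. -/
theorem statement1 {V : Type*} (G : SimpleGraph V) (hE : ∃ v w, G.Adj v w) (n : ℕ)
    (hn : ∀ A : Set ↥(GraphRealization G), A.encard = (n : ℕ∞) →
      ¬ ∃ f : Fin (n + 2) → ConnectedComponents ↥(Aᶜ), Function.Injective f) :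
    ∀ m : ℕ, 1 ≤ m → m ≤ n →
      ∀ A : Set ↥(GraphRealization G), A.encard = (m : ℕ∞) →
        ¬ ∃ f : Fin (m + 2) → ConnectedComponents ↥(Aᶜ), Function.Injective f := by
  classical
  intro m hm1 hmn A hA hex
  obtain ⟨f, hf⟩ := hex
  have hAfin : A.Finite := Set.finite_of_encard_eq_coe hA
  set k := n - m with hk_def
  have hmkn : m + k = n := by omega
  by_cases hanch : ∃ a ∈ A, ∃ v w t, G.Adj v w ∧ 0 ≤ t ∧ t < 1 ∧ a.1 = edgePoint v w t
  · -- anchored case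
    obtain ⟨a, haA, v, w, t, hvw, ht0, ht1, hav⟩ := hanch
    have hne := hvw.ne
    obtain ⟨s', hts', hs'1, hfree⟩ := exists_free_interval hne hAfin ht1
    set ε := (s' - t) / (k + 2) with hε_def
    have hε : 0 < ε := by
      apply div_pos (by linarith)
      positivity
    set C : ℕ → ℝ := fun j => if j = 0 then t else t + j * ε with hC_def
    have hC0 : C 0 = t := if_pos rfl
    have hCval : ∀ j, 1 ≤ j → C j = t + j * ε := fun j hj => if_neg (by omega)
    have hCin : ∀ j, 1 ≤ j → j ≤ k → t < C j ∧ C j < s' := by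
      intro j h1 h2
      rw [hCval j h1]
      constructor
      · have : (0:ℝ) < (j:ℝ) * ε := by
          apply mul_pos _ hε
          exact_mod_cast Nat.pos_of_ne_zero (by omega)
        linarith
      · have hj2 : (j:ℝ) ≤ (k:ℝ) := by exact_mod_cast h2
        have hk2 : t + ((k:ℝ) + 2) * ε = s' := by
          rw [hε_def]
          field_simp
          ring
        nlinarith
    have hCmono : ∀ j, j < k → C j < C (j + 1) := by
      intro j hj
      by_cases h : j = 0
      · subst h
        rw [hC0, hCval 1 le_rfl]
        push_cast
        linarith
      · rw [hCval j (by omega), hCval (j + 1) (by omega)]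
        push_cast
        linarith
    have hCk : C k < s' := by
      by_cases h : k = 0
      · rw [h, hC0]; exact hts'
      · exact (hCin k (by omega) le_rfl).2
    have hCIcc : ∀ j, j ≤ k → C j ∈ Set.Icc (0:ℝ) 1 := by
      intro j hj
      by_cases h : j = 0
      · subst h; rw [hC0]; exact ⟨ht0, le_of_lt ht1⟩
      · obtain ⟨h1, h2⟩ := hCin j (by omega) hj
        exact ⟨by linarith, by linarith⟩
    set cutF : Fin k → ↥(GraphRealization G) := fun i =>
      ⟨edgePoint v w (C ((i : ℕ) + 1)),
        mem_realization_edgePoint hvw (hCIcc _ (by omega))⟩ with hcutF_def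
    have hcutval : ∀ i : Fin k, (cutF i).1 = edgePoint v w (C ((i : ℕ) + 1)) := fun i => rfl
    have hcut_inj : Function.Injective cutF := by
      intro i1 i2 h
      have h2 := congrFun (congrArg Subtype.val h) w
      simp only [hcutF_def] at h2
      rw [edgePoint_right hne, edgePoint_right hne, hCval _ (by omega), hCval _ (by omega)] at h2
      have h3 : (((i1:ℕ):ℝ) + 1) * ε = (((i2:ℕ):ℝ) + 1) * ε := by
        push_cast at h2 ⊢
        linarith
      have h4 := mul_right_cancel₀ (ne_of_gt hε) h3
      have h5 : ((i1:ℕ):ℝ) = ((i2:ℕ):ℝ) := by linarith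
      exact Fin.ext (by exact_mod_cast h5)
    have hcut_notA : ∀ i : Fin k, cutF i ∉ A := by
      intro i hmem
      obtain ⟨h1, h2⟩ := hCin ((i:ℕ)+1) (by omega) (by omega)
      exact hfree _ h1 h2 ⟨cutF i, hmem, rfl⟩
    set B := A ∪ Set.range cutF with hB_def
    have hBenc : B.encard = (n : ℕ∞) := by
      rw [hB_def, encard_union_range hcut_inj hcut_notA, hA]
      rw [← Nat.cast_add, hmkn]
    have hcore := core (B := B) hvw f hf ht0 hs'1 hCmono (le_of_eq hC0.symm) hCk
      (by -- hCB
        intro j hj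
        by_cases h : j = 0
        · subst h
          rw [hC0]
          exact ⟨a, Set.mem_union_left _ haA, hav⟩
        · have hj1 : j - 1 + 1 = j := by omega
          refine ⟨cutF ⟨j - 1, by omega⟩, Set.mem_union_right _ ⟨_, rfl⟩, ?_⟩
          rw [hcutval]
          simp only [hj1])
      hfree
      (by -- hfreeB
        rintro r h1 h2 h3 ⟨b, hbB, hbval⟩
        rcases hbB with hbA | ⟨i, rfl⟩
        · exact hfree r h1 h2 ⟨b, hbA, hbval⟩
        · have h4 := congrFun hbval w
          rw [hcutval, edgePoint_right hne, edgePoint_right hne] at h4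
          exact h3 _ (by omega) h4.symm)
      (by -- hBsub
        intro x hx
        rcases hx with hxA | ⟨i, rfl⟩
        · exact Or.inl hxA
        · exact Or.inr ⟨(i:ℕ) + 1, by omega, (hCin _ (by omega) (by omega)).1, rfl⟩)
      (by -- htrans
        intro p q _ _ _ _ h
        exact connectedComponentIn_mono _
          (Set.compl_subset_compl.mpr Set.subset_union_left) h)
    obtain ⟨g, hg⟩ := hcore
    exact hn B hBenc ⟨g ∘ Fin.cast (by omega), hg.comp (Fin.cast_injective _)⟩
  · -- isolated case
    push_neg at hanch
    have hiso : ∀ a ∈ A, ∃ u, a.1 = vertexPoint u ∧ ∀ y, ¬ G.Adj u y := by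
      intro a ha
      rcases realization_dichotomy a with ⟨v, w, t, h1, h2, h3, h4⟩ | h
      · exact absurd h4 (hanch a ha v w t h1 h2 h3)
      · exact h
    have hAne : A.Nonempty := by
      apply Set.nonempty_of_encard_ne_zero
      rw [hA]
      exact_mod_cast Nat.cast_ne_zero.mpr (show m ≠ 0 by omega)
    obtain ⟨a, haA⟩ := hAne
    obtain ⟨u, hau, huiso⟩ := hiso a haA
    obtain ⟨v, w, hvw⟩ := hE
    have hne := hvw.ne
    have hvu : v ≠ u := fun h => huiso w (h ▸ hvw)
    have hwu : w ≠ u := fun h => huiso v (h ▸ hvw.symm)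
    have hfreeA : ∀ r : ℝ, 0 < r → r < 1 → edgePoint v w r ∉ Subtype.val '' A := by
      rintro r h0 h1 ⟨b, hbA, hbval⟩
      obtain ⟨u', hb, _⟩ := hiso b hbA
      have hvv := congrFun (hbval.symm.trans hb) v
      rw [edgePoint_left hne] at hvv
      by_cases hvu' : v = u'
      · rw [hvu', vertexPoint_self] at hvv; linarith
      · rw [vertexPoint_ne hvu'] at hvv; linarith
    have hzero : ∀ z : ↥(GraphRealization G), z.1 ≠ vertexPoint u → z.1 u = 0 := by
      intro z hz
      rcases z.2 with ⟨u', hu'⟩ | ⟨a', b', t', hab', ht', hx⟩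
      · have : u ≠ u' := fun h => hz (by rw [hu', h])
        rw [hu', vertexPoint_ne this]
      · have h1 : u ≠ a' := fun h => huiso b' (h ▸ hab')
        have h2 : u ≠ b' := fun h => huiso a' (h ▸ hab'.symm)
        rw [hx, edgePoint_other h1 h2]
    set ε : ℝ := 1 / (2 * (k + 2)) with hε_def
    have hε : 0 < ε := by positivity
    have hε2 : ((k:ℝ) + 2) * ε = 1 / 2 := by
      rw [hε_def]; field_simp
    set C : ℕ → ℝ := fun j => (j + 1) * ε with hC_def
    have hCpos : ∀ j, 0 < C j := by
      intro j
      apply mul_pos _ hε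
      positivity
    have hCmono : ∀ j, j < k → C j < C (j + 1) := by
      intro j hj
      simp only [hC_def]
      push_cast
      nlinarith [hε]
    have hCk : C k < 1 / 2 := by
      simp only [hC_def]
      nlinarith [hε]
    have hCub : ∀ j, j ≤ k → C j < 1 / 2 := by
      intro j hj
      simp only [hC_def]
      have h1 : (j:ℝ) ≤ (k:ℝ) := by exact_mod_cast hj
      nlinarith [hε, hε2, mul_nonneg (by linarith : (0:ℝ) ≤ (k:ℝ) - (j:ℝ)) (le_of_lt hε)]
    have hCIcc : ∀ j, j ≤ k → C j ∈ Set.Icc (0:ℝ) 1 := by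
      intro j hj
      refine ⟨le_of_lt (hCpos j), ?_⟩
      have h1 : (j:ℝ) ≤ (k:ℝ) := by exact_mod_cast hj
      simp only [hC_def]
      nlinarith [hε, hε2, mul_nonneg (by linarith : (0:ℝ) ≤ (k:ℝ) + 2 - ((j:ℝ) + 1)) (le_of_lt hε)]
    set cutF : Fin (k + 1) → ↥(GraphRealization G) := fun i =>
      ⟨edgePoint v w (C (i : ℕ)),
        mem_realization_edgePoint hvw (hCIcc _ (Nat.lt_succ_iff.mp i.isLt))⟩ with hcutF_def
    have hcutval : ∀ i : Fin (k + 1), (cutF i).1 = edgePoint v w (C (i : ℕ)) := fun i => rfl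
    have hcut_inj : Function.Injective cutF := by
      intro i1 i2 h
      have h2 := congrFun (congrArg Subtype.val h) w
      simp only [hcutF_def] at h2
      rw [edgePoint_right hne, edgePoint_right hne] at h2
      simp only [hC_def] at h2
      have h4 := mul_right_cancel₀ (ne_of_gt hε) h2
      have h5 : ((i1:ℕ):ℝ) = ((i2:ℕ):ℝ) := by linarith
      exact Fin.ext (by exact_mod_cast h5)
    have hcut_notA' : ∀ i : Fin (k + 1), cutF i ∉ A \ {a} := by
      intro i hmem
      refine hfreeA (C (i:ℕ)) (hCpos _) ?_ ⟨cutF i, hmem.1, rfl⟩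
      have h1 := hCub (i:ℕ) (Nat.lt_succ_iff.mp i.isLt)
      linarith
    set B := (A \ {a}) ∪ Set.range cutF with hB_def
    have hBenc : B.encard = (n : ℕ∞) := by
      rw [hB_def, encard_union_range hcut_inj hcut_notA']
      obtain ⟨m₀, rfl⟩ : ∃ m₀, m = m₀ + 1 := ⟨m - 1, by omega⟩
      have hdiff := Set.encard_diff_singleton_add_one haA
      have h2 : (A \ {a}).encard + 1 = (m₀ : ℕ∞) + 1 := by
        rw [hdiff, hA]
        push_cast
        ring
      have h1 : (A \ {a}).encard = (m₀ : ℕ∞) := WithTop.add_right_cancel (by exact ENat.one_ne_top) h2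
      rw [h1, ← Nat.cast_add]
      exact congrArg _ (by omega)
    have hcontu : Continuous fun z : ↥(GraphRealization G) => z.1 u :=
      (continuous_apply u).comp continuous_subtype_val
    have htrans : ∀ p q : ↥(GraphRealization G), p ∈ Bᶜ → q ∈ Bᶜ → p ∈ Aᶜ → q ∈ Aᶜ →
        q ∈ connectedComponentIn Bᶜ p → q ∈ connectedComponentIn Aᶜ p := by
      intro p q hpB hqB hpA hqA hin
      have hccPre : IsPreconnected (connectedComponentIn (Bᶜ) p) :=
        isPreconnected_connectedComponentIn
      have hpcc : p ∈ connectedComponentIn (Bᶜ) p := mem_connectedComponentIn hpB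
      have hacc : a ∉ connectedComponentIn (Bᶜ) p := by
        intro hacc
        have hU : IsOpen {z : ↥(GraphRealization G) | 1/2 < z.1 u} :=
          isOpen_Ioi.preimage hcontu
        have hV : IsOpen {z : ↥(GraphRealization G) | z.1 u < 1/2} :=
          isOpen_Iio.preimage hcontu
        have hpne : p.1 ≠ vertexPoint u := by
          intro h
          have hpa : p = a := Subtype.ext (by rw [h, hau])
          exact hpA (by rw [hpa]; exact haA)
        obtain ⟨z, hz1, hz2, hz3⟩ := hccPre _ _ hU hV
          (by
            intro z _
            by_cases hzu : z.1 = vertexPoint u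
            · left
              show 1/2 < z.1 u
              rw [hzu, vertexPoint_self]
              norm_num
            · right
              show z.1 u < 1/2
              rw [hzero z hzu]
              norm_num)
          ⟨a, hacc, by show 1/2 < a.1 u; rw [hau, vertexPoint_self]; norm_num⟩
          ⟨p, hpcc, by show p.1 u < 1/2; rw [hzero p hpne]; norm_num⟩
        simp only [Set.mem_setOf_eq] at hz2 hz3
        linarith
      have hccA : connectedComponentIn (Bᶜ) p ⊆ Aᶜ := by
        intro y hy hyA
        by_cases hya : y = a
        · exact hacc (hya ▸ hy)
        · exact (connectedComponentIn_subset _ _ hy) (Set.mem_union_left _ ⟨hyA, hya⟩)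
      exact hccPre.subset_connectedComponentIn hpcc hccA hin
    have hcore := core (B := B) hvw f hf le_rfl (by norm_num : (1:ℝ)/2 < 1) hCmono
      (le_of_lt (hCpos 0)) hCk
      (by -- hCB
        intro j hj
        exact ⟨cutF ⟨j, by omega⟩, Set.mem_union_right _ ⟨_, rfl⟩, rfl⟩)
      (by -- hfreeA
        intro r h1 h2
        exact hfreeA r h1 (by linarith))
      (by -- hfreeB
        rintro r h1 h2 h3 ⟨b, hbB, hbval⟩
        rcases hbB with hbA | ⟨i, rfl⟩
        · exact hfreeA r h1 (by linarith) ⟨b, hbA.1, hbval⟩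
        · have h4 := congrFun hbval w
          rw [hcutval, edgePoint_right hne, edgePoint_right hne] at h4
          exact h3 _ (Nat.lt_succ_iff.mp i.isLt) h4.symm)
      (by -- hBsub
        intro x hx
        rcases hx with hxA | ⟨i, rfl⟩
        · exact Or.inl hxA.1
        · exact Or.inr ⟨(i:ℕ), Nat.lt_succ_iff.mp i.isLt, hCpos _, rfl⟩)
      htrans
    obtain ⟨g, hg⟩ := hcore
    exact hn B hBenc ⟨g ∘ Fin.cast (by omega), hg.comp (Fin.cast_injective _)⟩
end

section
/- Let G=(V,E) be a simple graph, let V = A ∪ B be a partition of the vertex set, and suppose the edge cut E(A,B) consists of exactly n edges e_1 = a_1b_1, …, e_n = a_nb_n with a_i ∈ A and b_i ∈ B. Let x_i be an interior point of the closed edge ē_i in |G| for each i. Then every arc in |G| that contains x_1, …, x_n and has endpoints x_1 and x_n satisfies: if n is even, it contains both segments [a_1,x_1] and [a_n,x_n], or both segments [x_1,b_1] and [x_n,b_n]; if n is odd, it contains [a_1,x_1] and [x_n,b_n], or it contains [x_1,b_1] and [a_n,x_n]. -/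
open Topology

namespace S3
open Set Filter Topology
open scoped Classical

variable {V : Type*}

lemma edgePoint_fst (v w : V) (hvw : v ≠ w) (r : ℝ) : edgePoint v w r v = 1 - r := by
  simp [edgePoint, hvw]

lemma edgePoint_snd (v w : V) (hvw : v ≠ w) (r : ℝ) : edgePoint v w r w = r := by
  simp [edgePoint, Ne.symm hvw]

lemma edgePoint_pos_mem {v w u : V} {r : ℝ} (h : 0 < edgePoint v w r u) : u = v ∨ u = w := by
  by_contra hc
  push_neg at hc
  simp [edgePoint, hc.1, hc.2] at h

lemma edgePoint_flip (v w : V) (r : ℝ) : edgePoint v w r = edgePoint w v (1 - r) := by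
  funext u
  simp only [edgePoint]
  split_ifs <;> ring

lemma edgePoint_zero (v w : V) : edgePoint v w 0 = vertexPoint v := by
  funext u
  simp [edgePoint, vertexPoint]

lemma edgePoint_one (v w : V) : edgePoint v w 1 = vertexPoint w := by
  funext u
  simp [edgePoint, vertexPoint]

lemma vertexPoint_pos_mem {v u : V} (h : 0 < vertexPoint v u) : u = v := by
  by_contra hc
  simp [vertexPoint, hc] at h

/-- The sum of coordinates over `B`. -/
noncomputable def Hfun (B : Set V) (x : V → ℝ) : ℝ := ∑' v : B, x v

lemma hasSum_ite_coe (B : Set V) (v : V) (c : ℝ) :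
    HasSum (fun u : B => if (u : V) = v then c else 0) (if v ∈ B then c else 0) := by
  classical
  by_cases hv : v ∈ B
  · rw [if_pos hv]
    have heq : (fun u : B => if (u : V) = v then c else 0)
        = fun u : B => if u = ⟨v, hv⟩ then c else 0 := by
      funext u
      by_cases h : (u : V) = v
      · rw [if_pos h, if_pos (Subtype.ext h)]
      · rw [if_neg h, if_neg (fun hc => h (by rw [hc]))]
    rw [heq]
    exact hasSum_ite_eq _ c
  · rw [if_neg hv]
    have heq : (fun u : B => if (u : V) = v then c else 0) = fun _ => 0 := by
      funext u
      rw [if_neg (fun h : (u : V) = v => hv (h ▸ u.2))]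
    rw [heq]
    exact hasSum_zero

lemma H_vertex (B : Set V) (v : V) :
    Hfun B (vertexPoint v) = if v ∈ B then 1 else 0 := by
  have h := (hasSum_ite_coe B v 1).tsum_eq
  simpa [Hfun, vertexPoint] using h

lemma H_edge (B : Set V) (v w : V) (r : ℝ) :
    Hfun B (edgePoint v w r) =
      (if v ∈ B then 1 - r else 0) + (if w ∈ B then r else 0) := by
  have h := ((hasSum_ite_coe B v (1 - r)).add (hasSum_ite_coe B w r)).tsum_eq
  simpa [Hfun, edgePoint] using h

variable {G : SimpleGraph V}

lemma realization_cases {x : V → ℝ} (hx : x ∈ GraphRealization G) :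
    (∃ v, x = vertexPoint v) ∨
      ∃ v w r, G.Adj v w ∧ r ∈ Ioo (0:ℝ) 1 ∧ x = edgePoint v w r := by
  rcases hx with ⟨v, rfl⟩ | ⟨v, w, r, hadj, hr, rfl⟩
  · exact Or.inl ⟨v, rfl⟩
  · rcases eq_or_lt_of_le hr.1 with h0 | h0
    · exact Or.inl ⟨v, by rw [← h0, edgePoint_zero]⟩
    · rcases eq_or_lt_of_le hr.2 with h1 | h1
      · exact Or.inl ⟨w, by rw [h1, edgePoint_one]⟩
      · exact Or.inr ⟨v, w, r, hadj, ⟨h0, h1⟩, rfl⟩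

end S3
namespace S3
open Set Filter Topology
open scoped Classical

variable {V : Type*} {G : SimpleGraph V} {A B : Set V}

lemma H_mem01 {x : V → ℝ} (hx : x ∈ GraphRealization G) : Hfun B x ∈ Icc (0:ℝ) 1 := by
  rcases hx with ⟨v, rfl⟩ | ⟨v, w, r, _, hr, rfl⟩
  · rw [H_vertex]
    split_ifs <;> constructor <;> norm_num
  · rw [H_edge]
    obtain ⟨hr0, hr1⟩ := hr
    constructor <;> [skip; skip] <;> split_ifs <;> linarith

lemma H_leA (hdisj : Disjoint A B) {x : V → ℝ} (hx : x ∈ GraphRealization G)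
    {u : V} (hu : u ∈ A) : Hfun B x ≤ 1 - x u := by
  have notB : ∀ z, z ∈ A → z ∉ B := fun z hz hz' => Set.disjoint_left.mp hdisj hz hz'
  rcases hx with ⟨v, rfl⟩ | ⟨v, w, r, _, hr, rfl⟩
  · rw [H_vertex]
    simp only [vertexPoint]
    by_cases hvB : v ∈ B
    · by_cases huv : u = v
      · exact absurd (huv ▸ hvB) (notB u hu)
      · simp [hvB, huv]
    · by_cases huv : u = v <;> simp [hvB, huv]
  · rw [H_edge]
    obtain ⟨hr0, hr1⟩ := hr
    simp only [edgePoint]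
    have c1 : (if v ∈ B then 1 - r else 0) + (if u = v then 1 - r else 0) ≤ 1 - r := by
      by_cases hvB : v ∈ B
      · by_cases huv : u = v
        · exact absurd (huv ▸ hvB) (notB u hu)
        · simp [hvB, huv]
      · by_cases huv : u = v <;> simp [hvB, huv] <;> linarith
    have c2 : (if w ∈ B then r else 0) + (if u = w then r else 0) ≤ r := by
      by_cases hwB : w ∈ B
      · by_cases huw : u = w
        · exact absurd (huw ▸ hwB) (notB u hu)
        · simp [hwB, huw]
      · by_cases huw : u = w <;> simp [hwB, huw] <;> linarith
    linarith

lemma H_geB {x : V → ℝ} (hx : x ∈ GraphRealization G)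
    {u : V} (hu : u ∈ B) : x u ≤ Hfun B x := by
  rcases hx with ⟨v, rfl⟩ | ⟨v, w, r, _, hr, rfl⟩
  · rw [H_vertex]
    simp only [vertexPoint]
    by_cases huv : u = v
    · subst huv; simp [hu]
    · simp [huv]; split_ifs <;> norm_num
  · rw [H_edge]
    obtain ⟨hr0, hr1⟩ := hr
    simp only [edgePoint]
    have c1 : (if u = v then 1 - r else 0) ≤ (if v ∈ B then 1 - r else 0) := by
      by_cases huv : u = v
      · subst huv; simp [hu]
      · simp [huv]; split_ifs <;> linarith
    have c2 : (if u = w then r else 0) ≤ (if w ∈ B then r else 0) := by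
      by_cases huw : u = w
      · subst huw; simp [hu]
      · simp [huw]; split_ifs <;> linarith
    linarith

lemma H_twoCoords {x : V → ℝ} (hx : x ∈ GraphRealization G)
    {v w : V} (hvw : v ≠ w) (hv : 0 < x v) (hw : 0 < x w) :
    Hfun B x = (if v ∈ B then (1:ℝ) else 0) * x v + (if w ∈ B then (1:ℝ) else 0) * x w := by
  rcases realization_cases hx with ⟨p, rfl⟩ | ⟨p, q, r, hadj, hr, rfl⟩
  · exact absurd ((vertexPoint_pos_mem hv).trans (vertexPoint_pos_mem hw).symm) hvw
  · have hpq : p ≠ q := hadj.ne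
    rcases edgePoint_pos_mem hv with hvp | hvq
    · rcases edgePoint_pos_mem hw with hwp | hwq
      · exact absurd (hvp.trans hwp.symm) hvw
      · subst hvp; subst hwq
        rw [H_edge, edgePoint_fst _ _ hpq, edgePoint_snd _ _ hpq]
        split_ifs <;> ring
    · rcases edgePoint_pos_mem hw with hwp | hwq
      · subst hvq; subst hwp
        rw [H_edge, edgePoint_fst _ _ hpq, edgePoint_snd _ _ hpq]
        split_ifs <;> ring
      · subst hvq; subst hwq; exact absurd rfl hvw

lemma mem_A_or_B (hcover : A ∪ B = Set.univ) (v : V) : v ∈ A ∨ v ∈ B := by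
  have : v ∈ A ∪ B := by rw [hcover]; trivial
  exact this

lemma H_ident (hcover : A ∪ B = Set.univ) (hdisj : Disjoint A B)
    {n : ℕ} {a b : Fin n → V}
    (hcut : ∀ v w : V, G.Adj v w → v ∈ A → w ∈ B → ∃ i, v = a i ∧ w = b i)
    {x : V → ℝ} (hx : x ∈ GraphRealization G) (hH : Hfun B x ∈ Ioo (0:ℝ) 1) :
    ∃ i, x = edgePoint (a i) (b i) (Hfun B x) := by
  have notB : ∀ z, z ∈ A → z ∉ B := fun z hz hz' => Set.disjoint_left.mp hdisj hz hz'
  rcases realization_cases hx with ⟨v, rfl⟩ | ⟨v, w, r, hadj, hr, rfl⟩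
  · rw [H_vertex] at hH
    rcases hH with ⟨hH0, hH1⟩
    split_ifs at hH0 hH1 <;> linarith
  · have hHe : Hfun B (edgePoint v w r) =
        (if v ∈ B then 1 - r else 0) + (if w ∈ B then r else 0) := H_edge B v w r
    rcases mem_A_or_B hcover v with hvA | hvB
    · rcases mem_A_or_B hcover w with hwA | hwB
      · rw [H_edge, if_neg (notB v hvA), if_neg (notB w hwA)] at hH
        simp at hH
      · obtain ⟨i, hi1, hi2⟩ := hcut v w hadj hvA hwB
        refine ⟨i, ?_⟩
        rw [H_edge, if_neg (notB v hvA), if_pos hwB, zero_add, ← hi1, ← hi2]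
    · rcases mem_A_or_B hcover w with hwA | hwB
      · obtain ⟨i, hi1, hi2⟩ := hcut w v hadj.symm hwA hvB
        refine ⟨i, ?_⟩
        rw [H_edge, if_pos hvB, if_neg (notB w hwA), add_zero, ← hi1, ← hi2,
          edgePoint_flip]
      · rw [H_edge, if_pos hvB, if_pos hwB] at hH
        simp at hH

lemma edgePoint_eval (v w u : V) (r : ℝ) (hw : u ≠ w) :
    edgePoint v w r u = if u = v then 1 - r else 0 := by
  simp [edgePoint, hw]

lemma edgePoint_eval' (v w u : V) (r : ℝ) (hv : u ≠ v) :
    edgePoint v w r u = if u = w then r else 0 := by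
  simp [edgePoint, hv]

lemma uniq_core (hdisj : Disjoint A B) {n : ℕ} {a b : Fin n → V}
    (ha : ∀ i, a i ∈ A) (hb : ∀ i, b i ∈ B)
    (hdistinct : ∀ i j : Fin n, s(a i, b i) = s(a j, b j) → i = j)
    (i j : Fin n) (r r' : ℝ) (hr : r ∈ Ioo (0:ℝ) 1)
    (h : edgePoint (a i) (b i) r = edgePoint (a j) (b j) r') : i = j ∧ r = r' := by
  have hab : ∀ k l : Fin n, a k ≠ b l :=
    fun k l hkl => Set.disjoint_left.mp hdisj (ha k) (hkl ▸ hb l)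
  have h1 : (1 - r) = if a i = a j then 1 - r' else 0 := by
    have hc := congrFun h (a i)
    rw [edgePoint_fst _ _ (hab i i), edgePoint_eval _ _ _ _ (hab i j)] at hc
    exact hc
  have h2 : r = if b i = b j then r' else 0 := by
    have hc := congrFun h (b i)
    rw [edgePoint_snd _ _ (hab i i), edgePoint_eval' _ _ _ _ (Ne.symm (hab j i))] at hc
    exact hc
  by_cases haa : a i = a j
  · rw [if_pos haa] at h1
    have hrr : r = r' := by linarith
    by_cases hbb : b i = b j
    · refine ⟨hdistinct i j ?_, hrr⟩
      rw [haa, hbb]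
    · rw [if_neg hbb] at h2
      exact absurd h2 (by linarith [hr.1])
  · rw [if_neg haa] at h1
    exact absurd h1 (by linarith [hr.2])

end S3
namespace S3
open Set Filter Topology
open scoped Classical

variable {V : Type*} {G : SimpleGraph V} {A B : Set V}

lemma g_cont (hcover : A ∪ B = Set.univ) (hdisj : Disjoint A B)
    {F : ℝ → V → ℝ} (hFc : Continuous F)
    (hFmem : ∀ s, F s ∈ GraphRealization G) :
    Continuous (fun s => Hfun B (F s)) := by
  have notB : ∀ z, z ∈ A → z ∉ B := fun z hz hz' => Set.disjoint_left.mp hdisj hz hz'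
  have hcAt : ∀ z : V, Continuous fun s => F s z := fun z => (continuous_apply z).comp hFc
  rw [continuous_iff_continuousAt]
  intro s₀
  rcases realization_cases (hFmem s₀) with ⟨u, hu⟩ | ⟨v, w, r, hadj, hr, he⟩
  · rcases mem_A_or_B hcover u with huA | huB
    · have h0 : Hfun B (F s₀) = 0 := by
        rw [hu, H_vertex, if_neg (notB u huA)]
      have hFu : F s₀ u = 1 := by rw [hu]; simp [vertexPoint]
      unfold ContinuousAt
      simp only []
      rw [h0]
      have hup : Tendsto (fun s => 1 - F s u) (𝓝 s₀) (𝓝 0) := by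
        have h2 : Tendsto (fun s => 1 - F s u) (𝓝 s₀) (𝓝 (1 - F s₀ u)) :=
          (continuous_const.sub (hcAt u)).tendsto s₀
        rwa [show (1:ℝ) - F s₀ u = 0 by rw [hFu]; ring] at h2
      refine tendsto_of_tendsto_of_tendsto_of_le_of_le tendsto_const_nhds hup ?_ ?_
      · exact fun s => (H_mem01 (hFmem s)).1
      · exact fun s => H_leA hdisj (hFmem s) huA
    · have h0 : Hfun B (F s₀) = 1 := by
        rw [hu, H_vertex, if_pos huB]
      have hFu : F s₀ u = 1 := by rw [hu]; simp [vertexPoint]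
      unfold ContinuousAt
      simp only []
      rw [h0]
      have hlo : Tendsto (fun s => F s u) (𝓝 s₀) (𝓝 1) := by
        have := (hcAt u).tendsto s₀
        rwa [hFu] at this
      refine tendsto_of_tendsto_of_tendsto_of_le_of_le hlo tendsto_const_nhds ?_ ?_
      · exact fun s => H_geB (hFmem s) huB
      · exact fun s => (H_mem01 (hFmem s)).2
  · have hvw : v ≠ w := hadj.ne
    have hFv : F s₀ v = 1 - r := by rw [he]; exact edgePoint_fst _ _ hvw r
    have hFw : F s₀ w = r := by rw [he]; exact edgePoint_snd _ _ hvw r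
    have hev : ∀ᶠ s in 𝓝 s₀, 0 < F s v ∧ 0 < F s w := by
      have t1 : Tendsto (fun s => F s v) (𝓝 s₀) (𝓝 (F s₀ v)) := (hcAt v).tendsto s₀
      have t2 : Tendsto (fun s => F s w) (𝓝 s₀) (𝓝 (F s₀ w)) := (hcAt w).tendsto s₀
      have e1 := t1.eventually (lt_mem_nhds (show (0:ℝ) < F s₀ v by rw [hFv]; linarith [hr.2]))
      have e2 := t2.eventually (lt_mem_nhds (show (0:ℝ) < F s₀ w by rw [hFw]; linarith [hr.1]))
      exact e1.and e2
    have hφ : ContinuousAt (fun s => (if v ∈ B then (1:ℝ) else 0) * F s v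
        + (if w ∈ B then (1:ℝ) else 0) * F s w) s₀ :=
      ((continuous_const.mul (hcAt v)).add (continuous_const.mul (hcAt w))).continuousAt
    refine hφ.congr ?_
    filter_upwards [hev] with s hs
    exact (H_twoCoords (hFmem s) hvw hs.1 hs.2).symm

end S3
namespace S3
open Set Filter Topology
open scoped Classical

variable {V : Type*} {n : ℕ} {a b : Fin n → V} {t : Fin n → ℝ}
  {F : ℝ → V → ℝ} {g : ℝ → ℝ}

lemma continuous_edgePoint (v w : V) : Continuous (fun r : ℝ => edgePoint v w r) := by
  apply continuous_pi
  intro u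
  simp only [edgePoint]
  apply Continuous.add
  · by_cases h : u = v <;> simp [h] <;> fun_prop
  · by_cases h : u = w <;> simp [h] <;> fun_prop

/-- On an interval where `g` stays in `(0,1)`, `F` follows one single cut edge. -/
lemma locConst (hFc : Continuous F)
    (hId : ∀ s, g s ∈ Ioo (0:ℝ) 1 → ∃ i, F s = edgePoint (a i) (b i) (g s))
    (hUniq : ∀ (i j : Fin n) (r r' : ℝ), r ∈ Ioo (0:ℝ) 1 →
      edgePoint (a i) (b i) r = edgePoint (a j) (b j) r' → i = j ∧ r = r')
    (hab : ∀ i j : Fin n, a i ≠ b j)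
    {p q : ℝ} (hpq : p < q) (hU : ∀ s ∈ Ioo p q, g s ∈ Ioo (0:ℝ) 1) :
    ∃ k, ∀ s ∈ Ioo p q, F s = edgePoint (a k) (b k) (g s) := by
  classical
  set O : Fin n → Set ℝ := fun k => {s | 0 < F s (a k) ∧ 0 < F s (b k)} with hO
  have hOopen : ∀ k, IsOpen (O k) := by
    intro k
    have h1 : IsOpen {s | 0 < F s (a k)} :=
      isOpen_lt continuous_const ((continuous_apply (a k)).comp hFc)
    have h2 : IsOpen {s | 0 < F s (b k)} :=
      isOpen_lt continuous_const ((continuous_apply (b k)).comp hFc)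
    exact h1.inter h2
  have hmem_iff : ∀ s ∈ Ioo p q, ∀ k, s ∈ O k ↔ F s = edgePoint (a k) (b k) (g s) := by
    intro s hs k
    obtain ⟨i, hi⟩ := hId s (hU s hs)
    have hgs := hU s hs
    constructor
    · rintro ⟨hpos1, hpos2⟩
      rw [hi] at hpos1 hpos2
      rcases edgePoint_pos_mem hpos1 with h1 | h1
      · rcases edgePoint_pos_mem hpos2 with h2 | h2
        · exact absurd (h1 ▸ h2 ▸ rfl : a k = b k) (hab k k)
        · rw [hi, h1, h2]
      · exact absurd h1 (hab k i)
    · intro hk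
      constructor
      · rw [hk, edgePoint_fst _ _ (hab k k)]
        linarith [hgs.2]
      · rw [hk, edgePoint_snd _ _ (hab k k)]
        exact hgs.1
  set s₀ := (p + q) / 2 with hs₀
  have hs₀mem : s₀ ∈ Ioo p q := by constructor <;> simp [hs₀] <;> linarith
  obtain ⟨k, hk⟩ := hId s₀ (hU s₀ hs₀mem)
  refine ⟨k, ?_⟩
  by_contra hcon
  push_neg at hcon
  obtain ⟨s₁, hs₁mem, hs₁⟩ := hcon
  obtain ⟨k₁, hk₁⟩ := hId s₁ (hU s₁ hs₁mem)
  have hk₁ne : k₁ ≠ k := fun h => hs₁ (h ▸ hk₁)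
  have hcover' : Ioo p q ⊆ O k ∪ ⋃ (j : Fin n) (_ : j ≠ k), O j := by
    intro s hs
    obtain ⟨i, hi⟩ := hId s (hU s hs)
    by_cases hik : i = k
    · exact Or.inl ((hmem_iff s hs k).mpr (hik ▸ hi))
    · refine Or.inr (mem_iUnion.mpr ⟨i, mem_iUnion.mpr ⟨hik, ?_⟩⟩)
      exact (hmem_iff s hs i).mpr hi
  have hne1 : (Ioo p q ∩ O k).Nonempty := ⟨s₀, hs₀mem, (hmem_iff s₀ hs₀mem k).mpr hk⟩
  have hne2 : (Ioo p q ∩ ⋃ (j : Fin n) (_ : j ≠ k), O j).Nonempty :=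
    ⟨s₁, hs₁mem, mem_iUnion.mpr ⟨k₁, mem_iUnion.mpr ⟨hk₁ne, (hmem_iff s₁ hs₁mem k₁).mpr hk₁⟩⟩⟩
  obtain ⟨s₂, hs₂mem, hs₂1, hs₂2⟩ := isPreconnected_Ioo (u := O k)
    (v := ⋃ (j : Fin n) (_ : j ≠ k), O j) (hOopen k)
    (isOpen_iUnion fun j => isOpen_iUnion fun _ => hOopen j) hcover' hne1 hne2
  obtain ⟨j, hj⟩ := mem_iUnion.mp hs₂2
  obtain ⟨hjk, hj2⟩ := mem_iUnion.mp hj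
  have e1 := (hmem_iff s₂ hs₂mem k).mp hs₂1
  have e2 := (hmem_iff s₂ hs₂mem j).mp hj2
  exact hjk ((hUniq j k (g s₂) (g s₂) (hU s₂ hs₂mem) (e2.symm.trans e1)).1)

lemma boundary_limit (hFc : Continuous F) (hgc : Continuous g)
    {p q : ℝ} (hpq : p < q) {k : Fin n}
    (hE : ∀ s ∈ Ioo p q, F s = edgePoint (a k) (b k) (g s)) :
    F p = edgePoint (a k) (b k) (g p) ∧ F q = edgePoint (a k) (b k) (g q) := by
  have key : ∀ x, x ∈ closure (Ioo p q) → F x = edgePoint (a k) (b k) (g x) := by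
    intro x hx
    haveI : (𝓝[Ioo p q] x).NeBot := mem_closure_iff_nhdsWithin_neBot.mp hx
    have h1 : Tendsto F (𝓝[Ioo p q] x) (𝓝 (F x)) :=
      (hFc.tendsto x).mono_left nhdsWithin_le_nhds
    have h2 : Tendsto (fun s => edgePoint (a k) (b k) (g s)) (𝓝[Ioo p q] x)
        (𝓝 (edgePoint (a k) (b k) (g x))) :=
      (((continuous_edgePoint (a k) (b k)).comp hgc).tendsto x).mono_left nhdsWithin_le_nhds
    have heq : F =ᶠ[𝓝[Ioo p q] x] fun s => edgePoint (a k) (b k) (g s) := by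
      filter_upwards [self_mem_nhdsWithin] with s hs using hE s hs
    exact tendsto_nhds_unique (h1.congr' heq) h2
  rw [closure_Ioo hpq.ne] at key
  exact ⟨key p ⟨le_refl p, hpq.le⟩, key q ⟨hpq.le, le_refl q⟩⟩

lemma interval_edge (hFc : Continuous F) (hgc : Continuous g)
    (hId : ∀ s, g s ∈ Ioo (0:ℝ) 1 → ∃ i, F s = edgePoint (a i) (b i) (g s))
    (hUniq : ∀ (i j : Fin n) (r r' : ℝ), r ∈ Ioo (0:ℝ) 1 →
      edgePoint (a i) (b i) r = edgePoint (a j) (b j) r' → i = j ∧ r = r')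
    (hab : ∀ i j : Fin n, a i ≠ b j)
    {p q : ℝ} (hpq : p < q) (hU : ∀ s ∈ Ioo p q, g s ∈ Ioo (0:ℝ) 1) :
    ∃ k, ∀ s ∈ Icc p q, F s = edgePoint (a k) (b k) (g s) := by
  obtain ⟨k, hk⟩ := locConst hFc hId hUniq hab hpq hU
  obtain ⟨hkp, hkq⟩ := boundary_limit hFc hgc hpq hk
  refine ⟨k, fun s hs => ?_⟩
  rcases eq_or_lt_of_le hs.1 with h1 | h1
  · rw [← h1]; exact hkp
  · rcases eq_or_lt_of_le hs.2 with h2 | h2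
    · rw [h2]; exact hkq
    · exact hk s ⟨h1, h2⟩

lemma db (hFc : Continuous F) (hgc : Continuous g) (hFinj : InjOn F (Icc 0 1))
    (hId : ∀ s, g s ∈ Ioo (0:ℝ) 1 → ∃ i, F s = edgePoint (a i) (b i) (g s))
    (hUniq : ∀ (i j : Fin n) (r r' : ℝ), r ∈ Ioo (0:ℝ) 1 →
      edgePoint (a i) (b i) r = edgePoint (a j) (b j) r' → i = j ∧ r = r')
    (hab : ∀ i j : Fin n, a i ≠ b j)
    {c d : ℝ} (hcd : c < d) (hc0 : 0 ≤ c) (hd1 : d ≤ 1)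
    (hU : ∀ s ∈ Ioo c d, g s ∈ Ioo (0:ℝ) 1) : g c ≠ g d := by
  intro hgeq
  obtain ⟨k, hk⟩ := interval_edge hFc hgc hId hUniq hab hcd hU
  have h1 : F c = F d := by
    rw [hk c ⟨le_refl c, hcd.le⟩, hk d ⟨hcd.le, le_refl d⟩, hgeq]
  exact absurd (hFinj ⟨hc0, hcd.le.trans hd1⟩ ⟨hc0.trans hcd.le, hd1⟩ h1) hcd.ne

lemma crossing (hFc : Continuous F) (hgc : Continuous g) (hFinj : InjOn F (Icc 0 1))
    (hId : ∀ s, g s ∈ Ioo (0:ℝ) 1 → ∃ i, F s = edgePoint (a i) (b i) (g s))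
    (hUniq : ∀ (i j : Fin n) (r r' : ℝ), r ∈ Ioo (0:ℝ) 1 →
      edgePoint (a i) (b i) r = edgePoint (a j) (b j) r' → i = j ∧ r = r')
    (hab : ∀ i j : Fin n, a i ≠ b j)
    (hg01 : ∀ s, g s ∈ Icc (0:ℝ) 1) (ht : ∀ i, t i ∈ Ioo (0:ℝ) 1)
    {c d : ℝ} (hcd : c < d) (hc0 : 0 ≤ c) (hd1 : d ≤ 1)
    (hU : ∀ s ∈ Ioo c d, g s ∈ Ioo (0:ℝ) 1)
    (hgc' : g c ∉ Ioo (0:ℝ) 1) (hgd' : g d ∉ Ioo (0:ℝ) 1) :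
    ∃ s ∈ Ioo c d, ∃ k, F s = edgePoint (a k) (b k) (t k) := by
  obtain ⟨k, hk⟩ := interval_edge hFc hgc hId hUniq hab hcd hU
  have hne := db hFc hgc hFinj hId hUniq hab hcd hc0 hd1 hU
  have htk : t k ∈ uIcc (g c) (g d) := by
    have e1 : g c = 0 ∨ g c = 1 := by
      rcases hg01 c with ⟨x1, x2⟩
      by_contra hcc
      push_neg at hcc
      exact hgc' ⟨lt_of_le_of_ne x1 (Ne.symm hcc.1), lt_of_le_of_ne x2 hcc.2⟩
    have e2 : g d = 0 ∨ g d = 1 := by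
      rcases hg01 d with ⟨x1, x2⟩
      by_contra hcc
      push_neg at hcc
      exact hgd' ⟨lt_of_le_of_ne x1 (Ne.symm hcc.1), lt_of_le_of_ne x2 hcc.2⟩
    rcases e1 with e1 | e1 <;> rcases e2 with e2 | e2 <;>
      rw [e1, e2] <;> rw [Set.mem_uIcc] <;>
      [exact absurd (e1.trans e2.symm) hne; left; right; exact absurd (e1.trans e2.symm) hne] <;>
      exact ⟨(ht k).1.le, (ht k).2.le⟩
  have hIVT := intermediate_value_uIcc (f := g) (a := c) (b := d) (hgc.continuousOn)
  obtain ⟨s, hsmem, hgs⟩ := hIVT htk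
  rw [uIcc_of_le hcd.le] at hsmem
  have hsIoo : s ∈ Ioo c d := by
    constructor
    · rcases eq_or_lt_of_le hsmem.1 with h | h
      · exact absurd (h ▸ hgs ▸ ht k) hgc'
      · exact h
    · rcases eq_or_lt_of_le hsmem.2 with h | h
      · exact absurd (h ▸ hgs ▸ ht k) hgd'
      · exact h
  exact ⟨s, hsIoo, k, by rw [hk s hsmem, hgs]⟩

end S3
namespace S3
open Set Filter Topology
open scoped Classical

variable {V : Type*} {n : ℕ} {a b : Fin n → V} {t : Fin n → ℝ}
  {F : ℝ → V → ℝ} {g : ℝ → ℝ}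

lemma cross (hFc : Continuous F) (hgc : Continuous g) (hFinj : InjOn F (Icc 0 1))
    (hId : ∀ s, g s ∈ Ioo (0:ℝ) 1 → ∃ i, F s = edgePoint (a i) (b i) (g s))
    (hUniq : ∀ (i j : Fin n) (r r' : ℝ), r ∈ Ioo (0:ℝ) 1 →
      edgePoint (a i) (b i) r = edgePoint (a j) (b j) r' → i = j ∧ r = r')
    (hab : ∀ i j : Fin n, a i ≠ b j)
    (hg01 : ∀ s, g s ∈ Icc (0:ℝ) 1) (ht : ∀ i, t i ∈ Ioo (0:ℝ) 1)
    (hgE : ∀ (s : ℝ) (k : Fin n) (r : ℝ), r ∈ Icc (0:ℝ) 1 →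
      F s = edgePoint (a k) (b k) r → g s = r)
    {u v : ℝ} (huv : u < v) (hu0 : 0 ≤ u) (hv1 : v ≤ 1)
    {i j : Fin n} (hij : i ≠ j)
    (hFu : F u = edgePoint (a i) (b i) (t i)) (hFv : F v = edgePoint (a j) (b j) (t j))
    (hno : ∀ (k : Fin n), ∀ s ∈ Ioo u v, F s ≠ edgePoint (a k) (b k) (t k)) :
    ∃ ε : ℝ, (ε = 0 ∨ ε = 1) ∧
      (∃ d, u < d ∧ d ≤ v ∧ (∀ s ∈ Ico u d, g s ∈ Ioo (0:ℝ) 1) ∧ g d = ε) ∧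
      (∃ c, u ≤ c ∧ c < v ∧ (∀ s ∈ Ioc c v, g s ∈ Ioo (0:ℝ) 1) ∧ g c = ε) := by
  have hgu : g u = t i := hgE u i (t i) ⟨(ht i).1.le, (ht i).2.le⟩ hFu
  have hgv : g v = t j := hgE v j (t j) ⟨(ht j).1.le, (ht j).2.le⟩ hFv
  set T : Set ℝ := Icc u v ∩ g ⁻¹' (Ioo (0:ℝ) 1)ᶜ with hT
  have hTc : IsClosed T := isClosed_Icc.inter ((isOpen_Ioo.preimage hgc).isClosed_compl)
  have hTbb : BddBelow T := (bddBelow_Icc : BddBelow (Icc u v)).mono inter_subset_left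
  have hTba : BddAbove T := (bddAbove_Icc (a := u) (b := v)).mono inter_subset_left
  have hTne : T.Nonempty := by
    by_contra hemp
    rw [Set.not_nonempty_iff_eq_empty] at hemp
    have hallU : ∀ s ∈ Ioo u v, g s ∈ Ioo (0:ℝ) 1 := by
      intro s hs
      by_contra hgs
      have : s ∈ T := ⟨⟨hs.1.le, hs.2.le⟩, hgs⟩
      rw [hemp] at this
      exact this
    obtain ⟨k, hk⟩ := interval_edge hFc hgc hId hUniq hab huv hallU
    have hik : i = k := by
      have := (hk u ⟨le_refl u, huv.le⟩).symm.trans hFu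
      exact ((hUniq k i (g u) (t i) (hgu ▸ ht i) this).1).symm
    have hjk : j = k := by
      have := (hk v ⟨huv.le, le_refl v⟩).symm.trans hFv
      exact ((hUniq k j (g v) (t j) (hgv ▸ ht j) this).1).symm
    exact hij (hik.trans hjk.symm)
  set d := sInf T with hd
  set c := sSup T with hc
  have hdT : d ∈ T := hTc.csInf_mem hTne hTbb
  have hcT : c ∈ T := hTc.csSup_mem hTne hTba
  have hud : u < d := by
    rcases eq_or_lt_of_le hdT.1.1 with h | h
    · exact absurd (hgu ▸ ht i : g u ∈ Ioo (0:ℝ) 1) (h ▸ hdT.2)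
    · exact h
  have hcv : c < v := by
    rcases eq_or_lt_of_le hcT.1.2 with h | h
    · exact absurd (hgv ▸ ht j : g v ∈ Ioo (0:ℝ) 1) (h.symm ▸ hcT.2)
    · exact h
  have hdc : d ≤ c := csInf_le_csSup hTne hTbb hTba
  have hIco : ∀ s ∈ Ico u d, g s ∈ Ioo (0:ℝ) 1 := by
    intro s hs
    by_contra hgs
    have : s ∈ T := ⟨⟨hs.1, hs.2.le.trans (hdT.1.2)⟩, hgs⟩
    exact absurd (csInf_le hTbb this) (not_le_of_gt hs.2)
  have hIoc : ∀ s ∈ Ioc c v, g s ∈ Ioo (0:ℝ) 1 := by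
    intro s hs
    by_contra hgs
    have : s ∈ T := ⟨⟨(hcT.1.1).trans hs.1.le, hs.2⟩, hgs⟩
    exact absurd (le_csSup hTba this) (not_le_of_gt hs.1)
  have hgdc : g d = g c := by
    rcases eq_or_lt_of_le hdc with h | h
    · rw [h]
    · by_contra hne2
      -- find an intermediate point with value t i
      have htk : t i ∈ uIcc (g d) (g c) := by
        have e1 : g d = 0 ∨ g d = 1 := by
          rcases hg01 d with ⟨x1, x2⟩
          by_contra hcc
          push_neg at hcc
          exact hdT.2 ⟨lt_of_le_of_ne x1 (Ne.symm hcc.1), lt_of_le_of_ne x2 hcc.2⟩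
        have e2 : g c = 0 ∨ g c = 1 := by
          rcases hg01 c with ⟨x1, x2⟩
          by_contra hcc
          push_neg at hcc
          exact hcT.2 ⟨lt_of_le_of_ne x1 (Ne.symm hcc.1), lt_of_le_of_ne x2 hcc.2⟩
        rw [Set.mem_uIcc]
        rcases e1 with e1 | e1 <;> rcases e2 with e2 | e2 <;> rw [e1, e2]
        · exact absurd (e1.trans e2.symm) hne2
        · exact Or.inl ⟨(ht i).1.le, (ht i).2.le⟩
        · exact Or.inr ⟨(ht i).1.le, (ht i).2.le⟩
        · exact absurd (e1.trans e2.symm) hne2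
      obtain ⟨sm, hsmmem, hgsm⟩ := intermediate_value_uIcc (f := g) (a := d) (b := c)
        hgc.continuousOn htk
      rw [uIcc_of_le h.le] at hsmmem
      have hsmIoo : sm ∈ Ioo d c := by
        constructor
        · rcases eq_or_lt_of_le hsmmem.1 with hh | hh
          · exact absurd (hh ▸ hgsm ▸ ht i) hdT.2
          · exact hh
        · rcases eq_or_lt_of_le hsmmem.2 with hh | hh
          · exact absurd (hh ▸ hgsm ▸ ht i) hcT.2
          · exact hh
      -- maximal gap around sm
      set c' := sSup (T ∩ Icc u sm) with hc'
      set d' := sInf (T ∩ Icc sm v) with hd'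
      have hTc1 : IsClosed (T ∩ Icc u sm) := hTc.inter isClosed_Icc
      have hTc2 : IsClosed (T ∩ Icc sm v) := hTc.inter isClosed_Icc
      have hne1 : (T ∩ Icc u sm).Nonempty :=
        ⟨d, hdT, ⟨hdT.1.1, hsmIoo.1.le⟩⟩
      have hne2' : (T ∩ Icc sm v).Nonempty :=
        ⟨c, hcT, ⟨hsmIoo.2.le, hcT.1.2⟩⟩
      have hba1 : BddAbove (T ∩ Icc u sm) := hTba.mono inter_subset_left
      have hbb2 : BddBelow (T ∩ Icc sm v) := hTbb.mono inter_subset_left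
      have hc'mem : c' ∈ T ∩ Icc u sm := hTc1.csSup_mem hne1 hba1
      have hd'mem : d' ∈ T ∩ Icc sm v := hTc2.csInf_mem hne2' hbb2
      have hc'sm : c' < sm := by
        rcases eq_or_lt_of_le hc'mem.2.2 with hh | hh
        · exact absurd (hgsm ▸ ht i : g sm ∈ Ioo (0:ℝ) 1) (hh ▸ hc'mem.1.2)
        · exact hh
      have hsmd' : sm < d' := by
        rcases eq_or_lt_of_le hd'mem.2.1 with hh | hh
        · exact absurd (hgsm ▸ ht i : g sm ∈ Ioo (0:ℝ) 1) (hh.symm ▸ hd'mem.1.2)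
        · exact hh
      have hU' : ∀ s ∈ Ioo c' d', g s ∈ Ioo (0:ℝ) 1 := by
        intro s hs
        by_contra hgs
        have hsIcc : s ∈ Icc u v :=
          ⟨hc'mem.2.1.trans hs.1.le, hs.2.le.trans hd'mem.2.2⟩
        have hsT : s ∈ T := ⟨hsIcc, hgs⟩
        rcases le_total s sm with hss | hss
        · exact absurd (le_csSup hba1 ⟨hsT, hsIcc.1, hss⟩) (not_le_of_gt hs.1)
        · exact absurd (csInf_le hbb2 ⟨hsT, hss, hsIcc.2⟩) (not_le_of_gt hs.2)
      obtain ⟨s, hsIoo, k, hFs⟩ := crossing hFc hgc hFinj hId hUniq hab hg01 ht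
        (hc'sm.trans hsmd') (hu0.trans hc'mem.2.1) (hd'mem.1.1.2.trans hv1)
        hU' hc'mem.1.2 hd'mem.1.2
      have hsuv : s ∈ Ioo u v :=
        ⟨lt_of_le_of_lt hc'mem.2.1 hsIoo.1, lt_of_lt_of_le hsIoo.2 hd'mem.1.1.2⟩
      exact hno k s hsuv hFs
  refine ⟨g d, ?_, ⟨d, hud, hdT.1.2, hIco, rfl⟩, ⟨c, hud.le.trans hdc, hcv, hIoc, hgdc.symm⟩⟩
  rcases hg01 d with ⟨x1, x2⟩
  by_contra hcc
  push_neg at hcc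
  exact hdT.2 ⟨lt_of_le_of_ne x1 (Ne.symm hcc.1), lt_of_le_of_ne x2 hcc.2⟩

lemma seg (hFc : Continuous F) (hgc : Continuous g)
    (hId : ∀ s, g s ∈ Ioo (0:ℝ) 1 → ∃ i, F s = edgePoint (a i) (b i) (g s))
    (hUniq : ∀ (i j : Fin n) (r r' : ℝ), r ∈ Ioo (0:ℝ) 1 →
      edgePoint (a i) (b i) r = edgePoint (a j) (b j) r' → i = j ∧ r = r')
    (hab : ∀ i j : Fin n, a i ≠ b j) (ht : ∀ i, t i ∈ Ioo (0:ℝ) 1)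
    (hgE : ∀ (s : ℝ) (k : Fin n) (r : ℝ), r ∈ Icc (0:ℝ) 1 →
      F s = edgePoint (a k) (b k) r → g s = r)
    {u d : ℝ} {i : Fin n} (hud : u < d) (hu0 : 0 ≤ u) (hd1 : d ≤ 1)
    (hFu : F u = edgePoint (a i) (b i) (t i))
    (hU : ∀ s ∈ Ico u d, g s ∈ Ioo (0:ℝ) 1) {ε : ℝ} (hgd : g d = ε) :
    ∀ r ∈ uIcc (t i) ε, ∃ s ∈ Icc (0:ℝ) 1, F s = edgePoint (a i) (b i) r := by
  have hgu : g u = t i := hgE u i (t i) ⟨(ht i).1.le, (ht i).2.le⟩ hFu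
  have hU' : ∀ s ∈ Ioo u d, g s ∈ Ioo (0:ℝ) 1 := fun s hs => hU s ⟨hs.1.le, hs.2⟩
  obtain ⟨k, hk⟩ := interval_edge hFc hgc hId hUniq hab hud hU'
  have hik : i = k := by
    have := (hk u ⟨le_refl u, hud.le⟩).symm.trans hFu
    exact ((hUniq k i (g u) (t i) (hgu ▸ ht i) this).1).symm
  subst hik
  intro r hr
  rw [← hgu, ← hgd] at hr
  obtain ⟨s, hsmem, hgs⟩ := intermediate_value_uIcc (f := g) (a := u) (b := d)
    hgc.continuousOn hr
  rw [uIcc_of_le hud.le] at hsmem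
  refine ⟨s, ⟨hu0.trans hsmem.1, hsmem.2.trans hd1⟩, ?_⟩
  rw [hk s hsmem, hgs]

lemma seg' (hFc : Continuous F) (hgc : Continuous g)
    (hId : ∀ s, g s ∈ Ioo (0:ℝ) 1 → ∃ i, F s = edgePoint (a i) (b i) (g s))
    (hUniq : ∀ (i j : Fin n) (r r' : ℝ), r ∈ Ioo (0:ℝ) 1 →
      edgePoint (a i) (b i) r = edgePoint (a j) (b j) r' → i = j ∧ r = r')
    (hab : ∀ i j : Fin n, a i ≠ b j) (ht : ∀ i, t i ∈ Ioo (0:ℝ) 1)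
    (hgE : ∀ (s : ℝ) (k : Fin n) (r : ℝ), r ∈ Icc (0:ℝ) 1 →
      F s = edgePoint (a k) (b k) r → g s = r)
    {c v : ℝ} {j : Fin n} (hcv : c < v) (hc0 : 0 ≤ c) (hv1 : v ≤ 1)
    (hFv : F v = edgePoint (a j) (b j) (t j))
    (hU : ∀ s ∈ Ioc c v, g s ∈ Ioo (0:ℝ) 1) {ε : ℝ} (hgc' : g c = ε) :
    ∀ r ∈ uIcc (t j) ε, ∃ s ∈ Icc (0:ℝ) 1, F s = edgePoint (a j) (b j) r := by
  have hgv : g v = t j := hgE v j (t j) ⟨(ht j).1.le, (ht j).2.le⟩ hFv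
  have hU' : ∀ s ∈ Ioo c v, g s ∈ Ioo (0:ℝ) 1 := fun s hs => hU s ⟨hs.1, hs.2.le⟩
  obtain ⟨k, hk⟩ := interval_edge hFc hgc hId hUniq hab hcv hU'
  have hik : j = k := by
    have := (hk v ⟨hcv.le, le_refl v⟩).symm.trans hFv
    exact ((hUniq k j (g v) (t j) (hgv ▸ ht j) this).1).symm
  subst hik
  intro r hr
  rw [← hgv, ← hgc'] at hr
  obtain ⟨s, hsmem, hgs⟩ := intermediate_value_uIcc (f := g) (a := c) (b := v)
    hgc.continuousOn (by rwa [uIcc_comm] at hr)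
  rw [uIcc_of_le hcv.le] at hsmem
  refine ⟨s, ⟨hc0.trans hsmem.1, hsmem.2.trans hv1⟩, ?_⟩
  rw [hk s hsmem, hgs]

end S3

/-- The arc parametrized by `f` contains the segment of the edge `vw` between
parameters `r₀` and `r₁`. -/
def ArcContainsSeg {V : Type*} {G : SimpleGraph V}
    (f : ↥unitInterval → ↥(GraphRealization G)) (v w : V) (r₀ r₁ : ℝ) : Prop :=
  ∀ r ∈ Set.Icc r₀ r₁, ∃ s, (f s : V → ℝ) = edgePoint v w r

/-- Let `E(A,B) = {a₁b₁, …, aₙbₙ}` be an edge cut of `G` and `xᵢ` interior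
points of the edges `aᵢbᵢ`. Any arc containing all the `xᵢ` with endpoints `x₁` and `xₙ`
contains both `[a₁,x₁]` and `[aₙ,xₙ]`, or both `[x₁,b₁]` and `[xₙ,bₙ]`, if `n` is even;
and it contains `[a₁,x₁]` and `[xₙ,bₙ]`, or `[x₁,b₁]` and `[aₙ,xₙ]`, if `n` is odd. -/
theorem statement3 {V : Type*} (G : SimpleGraph V) (A B : Set V)
    (hcover : A ∪ B = Set.univ) (hdisj : Disjoint A B)
    (n : ℕ) (hn : 0 < n) (a b : Fin n → V) (t : Fin n → ℝ)
    (ha : ∀ i, a i ∈ A) (hb : ∀ i, b i ∈ B) (hadj : ∀ i, G.Adj (a i) (b i))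
    (hdistinct : ∀ i j : Fin n, s(a i, b i) = s(a j, b j) → i = j)
    (hcut : ∀ v w : V, G.Adj v w → v ∈ A → w ∈ B → ∃ i, v = a i ∧ w = b i)
    (ht : ∀ i, t i ∈ Set.Ioo (0 : ℝ) 1)
    (f : ↥unitInterval → ↥(GraphRealization G)) (hf : Topology.IsEmbedding f)
    (h0 : (f 0 : V → ℝ) = edgePoint (a ⟨0, hn⟩) (b ⟨0, hn⟩) (t ⟨0, hn⟩))
    (h1 : (f 1 : V → ℝ) =
      edgePoint (a ⟨n - 1, by omega⟩) (b ⟨n - 1, by omega⟩) (t ⟨n - 1, by omega⟩))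
    (hall : ∀ i : Fin n, ∃ s, (f s : V → ℝ) = edgePoint (a i) (b i) (t i)) :
    (Even n →
      (ArcContainsSeg f (a ⟨0, hn⟩) (b ⟨0, hn⟩) 0 (t ⟨0, hn⟩) ∧
        ArcContainsSeg f (a ⟨n - 1, by omega⟩) (b ⟨n - 1, by omega⟩) 0 (t ⟨n - 1, by omega⟩)) ∨
      (ArcContainsSeg f (a ⟨0, hn⟩) (b ⟨0, hn⟩) (t ⟨0, hn⟩) 1 ∧
        ArcContainsSeg f (a ⟨n - 1, by omega⟩) (b ⟨n - 1, by omega⟩) (t ⟨n - 1, by omega⟩) 1)) ∧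
    (Odd n →
      (ArcContainsSeg f (a ⟨0, hn⟩) (b ⟨0, hn⟩) 0 (t ⟨0, hn⟩) ∧
        ArcContainsSeg f (a ⟨n - 1, by omega⟩) (b ⟨n - 1, by omega⟩) (t ⟨n - 1, by omega⟩) 1) ∨
      (ArcContainsSeg f (a ⟨0, hn⟩) (b ⟨0, hn⟩) (t ⟨0, hn⟩) 1 ∧
        ArcContainsSeg f (a ⟨n - 1, by omega⟩) (b ⟨n - 1, by omega⟩) 0 (t ⟨n - 1, by omega⟩))) := by
  
  classical
  have hn' : n - 1 < n := by omega
  by_cases hn1 : n = 1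
  · exfalso
    subst hn1
    have h01 : (f 0 : V → ℝ) = (f 1 : V → ℝ) := h0.trans h1.symm
    have h2 : (0 : ↥unitInterval) = 1 := hf.injective (Subtype.ext h01)
    have h3 : (0 : ℝ) = 1 := congrArg Subtype.val h2
    norm_num at h3
  have hn2 : 1 < n := by omega
  -- the straightened parametrization and its height function
  set F : ℝ → V → ℝ := fun s => ((f (Set.projIcc 0 1 zero_le_one s) : V → ℝ)) with hFdef
  have hFc : Continuous F :=
    continuous_subtype_val.comp (hf.continuous.comp continuous_projIcc)
  have hFmem : ∀ s, F s ∈ GraphRealization G := fun s => (f _).2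
  have hFinj : Set.InjOn F (Set.Icc 0 1) := by
    intro x hx y hy hxy
    have h1' : f (Set.projIcc 0 1 zero_le_one x) = f (Set.projIcc 0 1 zero_le_one y) :=
      Subtype.ext hxy
    have h2 := hf.injective h1'
    rw [Set.projIcc_of_mem _ hx, Set.projIcc_of_mem _ hy] at h2
    exact congrArg Subtype.val h2
  set g : ℝ → ℝ := fun s => S3.Hfun B (F s) with hgdef
  have hgc : Continuous g := S3.g_cont hcover hdisj hFc hFmem
  have hab : ∀ i j : Fin n, a i ≠ b j :=
    fun i j hij => Set.disjoint_left.mp hdisj (ha i) (hij ▸ hb j)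
  have hUniq : ∀ (i j : Fin n) (r r' : ℝ), r ∈ Set.Ioo (0:ℝ) 1 →
      edgePoint (a i) (b i) r = edgePoint (a j) (b j) r' → i = j ∧ r = r' :=
    fun i j r r' hr h => S3.uniq_core hdisj ha hb hdistinct i j r r' hr h
  have hId : ∀ s, g s ∈ Set.Ioo (0:ℝ) 1 → ∃ i, F s = edgePoint (a i) (b i) (g s) :=
    fun s hs => S3.H_ident hcover hdisj hcut (hFmem s) hs
  have hg01 : ∀ s, g s ∈ Set.Icc (0:ℝ) 1 := fun s => S3.H_mem01 (hFmem s)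
  have hnotB : ∀ z, z ∈ A → z ∉ B := fun z hz hz' => Set.disjoint_left.mp hdisj hz hz'
  have hgE : ∀ (s : ℝ) (k : Fin n) (r : ℝ), r ∈ Set.Icc (0:ℝ) 1 →
      F s = edgePoint (a k) (b k) r → g s = r := by
    intro s k r hr hFs
    show S3.Hfun B (F s) = r
    rw [hFs, S3.H_edge, if_neg (hnotB _ (ha k)), if_pos (hb k), zero_add]
  -- visit times
  have hall' : ∀ i : Fin n, ∃ s : ℝ, s ∈ Set.Icc (0:ℝ) 1 ∧
      F s = edgePoint (a i) (b i) (t i) := by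
    intro i
    obtain ⟨s, hs⟩ := hall i
    refine ⟨(s : ℝ), s.2, ?_⟩
    show ((f (Set.projIcc 0 1 zero_le_one (s : ℝ))) : V → ℝ) = _
    rw [Set.projIcc_val]
    exact hs
  choose S hS01 hFS using hall'
  have hSinj : Function.Injective S := by
    intro i j hij
    have hFF : F (S i) = F (S j) := by rw [hij]
    rw [hFS i, hFS j] at hFF
    exact (hUniq i j (t i) (t j) (ht i) hFF).1
  have hF0 : F 0 = edgePoint (a ⟨0, hn⟩) (b ⟨0, hn⟩) (t ⟨0, hn⟩) := by
    show ((f (Set.projIcc 0 1 zero_le_one 0)) : V → ℝ) = _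
    rw [Set.projIcc_left]
    exact h0
  have hF1 : F 1 = edgePoint (a ⟨n - 1, hn'⟩) (b ⟨n - 1, hn'⟩) (t ⟨n - 1, hn'⟩) := by
    show ((f (Set.projIcc 0 1 zero_le_one 1)) : V → ℝ) = _
    rw [Set.projIcc_right]
    exact h1
  have hS0 : S ⟨0, hn⟩ = 0 :=
    hFinj (hS01 _) ⟨le_refl 0, zero_le_one⟩ (by rw [hFS, hF0])
  have hS1 : S ⟨n - 1, hn'⟩ = 1 :=
    hFinj (hS01 _) ⟨zero_le_one, le_refl 1⟩ (by rw [hFS, hF1])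
  -- sorting the visit times
  set σ : Equiv.Perm (Fin n) := Tuple.sort S with hσdef
  have humono : Monotone (S ∘ ⇑σ) := Tuple.monotone_sort S
  set u : Fin n → ℝ := S ∘ ⇑σ with hudef
  have husm : StrictMono u := humono.strictMono_of_injective (hSinj.comp σ.injective)
  have hu01 : ∀ k, u k ∈ Set.Icc (0:ℝ) 1 := fun k => hS01 _
  have huS : ∀ m : Fin n, S m = u (σ.symm m) := by
    intro m
    show S m = S (σ (σ.symm m))
    rw [Equiv.apply_symm_apply]
  have hu0 : u ⟨0, hn⟩ = 0 := by
    apply le_antisymm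
    · calc u ⟨0, hn⟩ ≤ u (σ.symm ⟨0, hn⟩) := humono (by rw [Fin.le_def]; exact Nat.zero_le _)
        _ = S ⟨0, hn⟩ := (huS _).symm
        _ = 0 := hS0
    · exact (hu01 _).1
  have hu1 : u ⟨n - 1, hn'⟩ = 1 := by
    apply le_antisymm
    · exact (hu01 _).2
    · calc (1:ℝ) = S ⟨n - 1, hn'⟩ := hS1.symm
        _ = u (σ.symm ⟨n - 1, hn'⟩) := huS _
        _ ≤ u ⟨n - 1, hn'⟩ := by
            apply humono
            rw [Fin.le_def]
            have h2 := (σ.symm (⟨n - 1, hn'⟩ : Fin n)).isLt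
            show ((σ.symm (⟨n - 1, hn'⟩ : Fin n)) : ℕ) ≤ n - 1
            omega
  have hσ0 : σ ⟨0, hn⟩ = ⟨0, hn⟩ := by
    apply hSinj
    have e1 : S (σ ⟨0, hn⟩) = u ⟨0, hn⟩ := rfl
    rw [e1, hu0, hS0]
  have hσ1 : σ ⟨n - 1, hn'⟩ = ⟨n - 1, hn'⟩ := by
    apply hSinj
    have e1 : S (σ ⟨n - 1, hn'⟩) = u ⟨n - 1, hn'⟩ := rfl
    rw [e1, hu1, hS1]
  -- no visit times strictly inside a gap
  have hnomid : ∀ (k : ℕ) (hk : k + 1 < n) (kk : Fin n),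
      ∀ s ∈ Set.Ioo (u ⟨k, by omega⟩) (u ⟨k + 1, hk⟩),
        F s ≠ edgePoint (a kk) (b kk) (t kk) := by
    intro k hk kk s hs hFs
    have hsIcc : s ∈ Set.Icc (0:ℝ) 1 :=
      ⟨(hu01 ⟨k, by omega⟩).1.trans hs.1.le, hs.2.le.trans (hu01 ⟨k + 1, hk⟩).2⟩
    have hsS : s = S kk := hFinj hsIcc (hS01 kk) (by rw [hFs, hFS])
    rw [hsS, huS kk] at hs
    rcases le_or_gt (σ.symm kk) ⟨k, by omega⟩ with hm | hm
    · exact absurd (humono hm) (not_le_of_gt hs.1)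
    · have hm' : (⟨k + 1, hk⟩ : Fin n) ≤ σ.symm kk := by
        rw [Fin.le_def]
        rw [Fin.lt_def] at hm
        simp only [] at hm ⊢
        omega
      exact absurd (humono hm') (not_le_of_gt hs.2)
  -- crossing data for each gap
  have cross' : ∀ (k : ℕ) (hk : k + 1 < n),
      ∃ ε : ℝ, (ε = 0 ∨ ε = 1) ∧
        (∃ d, u ⟨k, by omega⟩ < d ∧ d ≤ u ⟨k + 1, hk⟩ ∧
          (∀ s ∈ Set.Ico (u ⟨k, by omega⟩) d, g s ∈ Set.Ioo (0:ℝ) 1) ∧ g d = ε) ∧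
        (∃ c, u ⟨k, by omega⟩ ≤ c ∧ c < u ⟨k + 1, hk⟩ ∧
          (∀ s ∈ Set.Ioc c (u ⟨k + 1, hk⟩), g s ∈ Set.Ioo (0:ℝ) 1) ∧ g c = ε) := by
    intro k hk
    refine S3.cross hFc hgc hFinj hId hUniq hab hg01 ht hgE
      (husm (show (⟨k, by omega⟩ : Fin n) < ⟨k + 1, hk⟩ from Fin.mk_lt_mk.mpr (by omega)))
      (hu01 _).1 (hu01 _).2
      (i := σ ⟨k, by omega⟩) (j := σ ⟨k + 1, hk⟩)
      (fun h => by
        have := σ.injective h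
        rw [Fin.mk.injEq] at this
        omega)
      (hFS _) (hFS _) (hnomid k hk)
  choose eps heps hR hL using cross'
  -- alternation of the exit sides
  have halt : ∀ (k : ℕ) (hk : k + 2 < n),
      eps (k + 1) (by omega) = 1 - eps k (by omega) := by
    intro k hk
    obtain ⟨c, hc1, hc2, hcU, hcg⟩ := hL k (by omega)
    obtain ⟨d, hd1, hd2, hdU, hdg⟩ := hR (k + 1) (by omega)
    have hcd : c < d := hc2.trans hd1
    have hU : ∀ s ∈ Set.Ioo c d, g s ∈ Set.Ioo (0:ℝ) 1 := by
      intro s hs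
      rcases le_or_gt s (u ⟨k + 1, by omega⟩) with h | h
      · exact hcU s ⟨hs.1, h⟩
      · exact hdU s ⟨h.le, hs.2⟩
    have hne := S3.db hFc hgc hFinj hId hUniq hab hcd
      ((hu01 ⟨k, by omega⟩).1.trans hc1) (hd2.trans (hu01 ⟨k + 2, hk⟩).2) hU
    have hne' : eps k (by omega) ≠ eps (k + 1) (by omega) := by
      rw [← hcg, ← hdg]
      exact hne
    rcases heps k (by omega) with h | h <;> rcases heps (k + 1) (by omega) with h' | h'
    · exact absurd (h.trans h'.symm) hne'
    · rw [h, h']; norm_num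
    · rw [h, h']; norm_num
    · exact absurd (h.trans h'.symm) hne'
  have hepsval : ∀ (k : ℕ) (hk : k + 1 < n),
      eps k hk = if Even k then eps 0 (by omega) else 1 - eps 0 (by omega) := by
    intro k
    induction k with
    | zero => intro hk; simp
    | succ m ih =>
      intro hk
      rw [halt m (by omega), ih (by omega)]
      by_cases he : Even m
      · simp [he, Nat.even_add_one]
      · simp [he, Nat.even_add_one]
  -- the two end segments
  obtain ⟨d, hd1, hd2, hdU, hdg⟩ := hR 0 (by omega)
  have hFu0 : F (u ⟨0, hn⟩) = edgePoint (a ⟨0, hn⟩) (b ⟨0, hn⟩) (t ⟨0, hn⟩) := by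
    show F (S (σ ⟨0, hn⟩)) = _
    rw [hσ0]
    exact hFS _
  have hseg1 : ∀ r ∈ Set.uIcc (t ⟨0, hn⟩) (eps 0 (by omega)),
      ∃ s ∈ Set.Icc (0:ℝ) 1, F s = edgePoint (a ⟨0, hn⟩) (b ⟨0, hn⟩) r :=
    S3.seg hFc hgc hId hUniq hab ht hgE hd1 (hu01 _).1
      (hd2.trans (hu01 _).2) hFu0 hdU hdg
  have hidx : (⟨n - 2 + 1, by omega⟩ : Fin n) = ⟨n - 1, hn'⟩ := by
    rw [Fin.mk.injEq]
    omega
  obtain ⟨c, hc1, hc2, hcU, hcg⟩ := hL (n - 2) (by omega)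
  rw [hidx] at hc2 hcU
  have hFu1 : F (u ⟨n - 1, hn'⟩)
      = edgePoint (a ⟨n - 1, hn'⟩) (b ⟨n - 1, hn'⟩) (t ⟨n - 1, hn'⟩) := by
    show F (S (σ ⟨n - 1, hn'⟩)) = _
    rw [hσ1]
    exact hFS _
  have hseg2 : ∀ r ∈ Set.uIcc (t ⟨n - 1, hn'⟩) (eps (n - 2) (by omega)),
      ∃ s ∈ Set.Icc (0:ℝ) 1, F s = edgePoint (a ⟨n - 1, hn'⟩) (b ⟨n - 1, hn'⟩) r :=
    S3.seg' hFc hgc hId hUniq hab ht hgE hc2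
      ((hu01 ⟨n - 2, by omega⟩).1.trans hc1) (hu01 _).2 hFu1 hcU hcg
  -- converting to ArcContainsSeg
  have toACS : ∀ (i : Fin n) (r : ℝ),
      (∃ s ∈ Set.Icc (0:ℝ) 1, F s = edgePoint (a i) (b i) r) →
      ∃ s', ((f s' : V → ℝ) = edgePoint (a i) (b i) r) := by
    rintro i r ⟨s, hs, hFs⟩
    refine ⟨⟨s, hs⟩, ?_⟩
    rw [← hFs]
    show _ = ((f (Set.projIcc 0 1 zero_le_one s)) : V → ℝ)
    rw [Set.projIcc_of_mem _ hs]
  have heps2 : eps (n - 2) (by omega) =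
      if Even (n - 2) then eps 0 (by omega) else 1 - eps 0 (by omega) :=
    hepsval (n - 2) (by omega)
  constructor
  · intro hev
    have hpar : Even (n - 2) := by
      rw [Nat.even_iff] at hev ⊢
      omega
    have he1e0 : eps (n - 2) (by omega) = eps 0 (by omega) := by
      rw [heps2, if_pos hpar]
    rcases heps 0 (by omega) with h | h
    · left
      constructor
      · intro r hr
        refine toACS _ r (hseg1 r ?_)
        rw [h, Set.uIcc_of_ge (ht _).1.le]
        exact hr
      · intro r hr
        refine toACS _ r (hseg2 r ?_)
        rw [he1e0, h, Set.uIcc_of_ge (ht _).1.le]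
        exact hr
    · right
      constructor
      · intro r hr
        refine toACS _ r (hseg1 r ?_)
        rw [h, Set.uIcc_of_le (ht _).2.le]
        exact hr
      · intro r hr
        refine toACS _ r (hseg2 r ?_)
        rw [he1e0, h, Set.uIcc_of_le (ht _).2.le]
        exact hr
  · intro hodd
    have hpar : ¬ Even (n - 2) := by
      rw [Nat.odd_iff] at hodd
      rw [Nat.even_iff]
      omega
    have he1e0 : eps (n - 2) (by omega) = 1 - eps 0 (by omega) := by
      rw [heps2, if_neg hpar]
    rcases heps 0 (by omega) with h | h
    · left
      constructor
      · intro r hr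
        refine toACS _ r (hseg1 r ?_)
        rw [h, Set.uIcc_of_ge (ht _).1.le]
        exact hr
      · intro r hr
        refine toACS _ r (hseg2 r ?_)
        rw [he1e0, h, sub_zero, Set.uIcc_of_le (ht _).2.le]
        exact hr
    · right
      constructor
      · intro r hr
        refine toACS _ r (hseg1 r ?_)
        rw [h, Set.uIcc_of_le (ht _).2.le]
        exact hr
      · intro r hr
        refine toACS _ r (hseg2 r ?_)
        rw [he1e0, h, sub_self, Set.uIcc_of_ge (ht _).1.le]
        exact hr
end
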